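/- arXiv:1310.7954 — 9 statements merged into one kernel-verified Lean document; each statement's English description precedes it below -/
import Mathlib

section
/- For every integer n ≥ 1, every α ∈ (0,1], and every θ with θ₁ ≤ θ ≤ θ₂ (where θ₁ = arctan(√(1/α² − 1)·(2^{1/n} − 1)) and θ₂ = arctan(√(1/α² − 1)/(2^{1/n} − 1))), there exists a positive semidefinite matrix X indexed by (Fin n → Fin 2) × (Fin n → Fin 2) whose partial trace over the first factor equals the identity (for all x, x': Σ_y X((y,x),(y,x')) = if x = x' then 1 else 0) and such that trace(Q₀^{⊗n} · X) = 0; that is, Bob achieves perfect hedging, winning at least 1 out of n parallel repetitions with certainty. -/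
open scoped BigOperators ComplexOrder
open scoped Real

/-- The losing measurement vector `ψ₀¹ = α sin θ |00⟩ − √(1−α²) cos θ |11⟩`. -/
noncomputable def psi1 (α θ : ℝ) : Fin 2 × Fin 2 → ℂ := fun p =>
  if p = (0, 0) then ((α * Real.sin θ : ℝ) : ℂ)
  else if p = (1, 1) then (-(Real.sqrt (1 - α ^ 2) * Real.cos θ) : ℝ)
  else 0

/-- The losing measurement vector `ψ₀² = α sin θ |01⟩ + √(1−α²) cos θ |10⟩`. -/
noncomputable def psi2 (α θ : ℝ) : Fin 2 × Fin 2 → ℂ := fun p =>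
  if p = (0, 1) then ((α * Real.sin θ : ℝ) : ℂ)
  else if p = (1, 0) then ((Real.sqrt (1 - α ^ 2) * Real.cos θ : ℝ) : ℂ)
  else 0

/-- The losing measurement vector `ψ₀³ = α cos θ |01⟩ − √(1−α²) sin θ |10⟩`. -/
noncomputable def psi3 (α θ : ℝ) : Fin 2 × Fin 2 → ℂ := fun p =>
  if p = (0, 1) then ((α * Real.cos θ : ℝ) : ℂ)
  else if p = (1, 0) then (-(Real.sqrt (1 - α ^ 2) * Real.sin θ) : ℝ)
  else 0

/-- Alice's effective losing operator `Q₀ = ψ₀¹(ψ₀¹)* + ψ₀²(ψ₀²)* + ψ₀³(ψ₀³)*` for one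
repetition of the game. -/
noncomputable def Q0 (α θ : ℝ) : Matrix (Fin 2 × Fin 2) (Fin 2 × Fin 2) ℂ :=
  Matrix.of fun i j =>
    psi1 α θ i * (starRingEnd ℂ) (psi1 α θ j) +
    psi2 α θ i * (starRingEnd ℂ) (psi2 α θ j) +
    psi3 α θ i * (starRingEnd ℂ) (psi3 α θ j)

/-- The `n`-fold Kronecker power `Q₀^{⊗n}`, indexed by `(Fin n → Fin 2) × (Fin n → Fin 2)`. -/
noncomputable def Q0pow (n : ℕ) (α θ : ℝ) :
    Matrix ((Fin n → Fin 2) × (Fin n → Fin 2)) ((Fin n → Fin 2) × (Fin n → Fin 2)) ℂ :=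
  Matrix.of fun p q => ∏ i, Q0 α θ (p.1 i, p.2 i) (q.1 i, q.2 i)

lemma key_le (n : ℕ) (hn : 1 ≤ n) (a b : ℝ) (ha : 0 ≤ a) (hab : a ≤ b)
    (h2 : 2 * b ^ n ≤ (a + b) ^ n) :
    ∃ lam : (Fin n → Fin 2) → ℂ, (∀ x, ‖lam x‖ = 1) ∧
      ∑ x : Fin n → Fin 2, lam x * ∏ i, (if x i = 0 then (a : ℂ) else (-b : ℂ)) = 0 := by
  have hb : 0 ≤ b := ha.trans hab
  rcases eq_or_lt_of_le hb with hb0 | hb0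
  · have ha0 : a = 0 := le_antisymm (hab.trans hb0.symm.le) ha
    refine ⟨fun _ => 1, fun _ => by simp, ?_⟩
    have hz : ∀ x : Fin n → Fin 2, (∏ i, (if x i = 0 then (a : ℂ) else (-b : ℂ))) = 0 := by
      intro x
      apply Finset.prod_eq_zero (Finset.mem_univ (⟨0, hn⟩ : Fin n))
      rcases eq_or_ne (x ⟨0, hn⟩) 0 with h | h <;> simp [h, ha0, ← hb0]
    simp [hz]
  · set f : ℝ → ℝ := fun φ =>
      ‖((a : ℂ) + (b : ℂ) * Complex.exp (φ * Complex.I)) ^ n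
        - ((b : ℂ) * Complex.exp (φ * Complex.I)) ^ n‖ with hf
    have hcont : Continuous f := by
      apply continuous_norm.comp
      fun_prop
    have hbn : (0:ℝ) < b ^ n := pow_pos hb0 n
    have hf0 : b ^ n ≤ f 0 := by
      have h : f 0 = (a + b) ^ n - b ^ n := by
        simp only [hf, Complex.ofReal_zero, zero_mul, Complex.exp_zero, mul_one]
        rw [show ((a:ℂ) + b) ^ n - (b:ℂ) ^ n = (((a+b)^n - b^n : ℝ) : ℂ) by push_cast; ring]
        rw [Complex.norm_real, Real.norm_eq_abs, abs_of_nonneg (by nlinarith)]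
      rw [h]; nlinarith
    have hfpi : f π ≤ b ^ n := by
      have h : f π = |(a-b)^n - (-b)^n| := by
        simp only [hf, Complex.exp_pi_mul_I]
        rw [show ((a:ℂ) + b*(-1))^n - ((b:ℂ)*(-1))^n = (((a-b)^n - (-b)^n : ℝ) : ℂ) by
          push_cast; ring]
        rw [Complex.norm_real, Real.norm_eq_abs]
      have key1 : (a-b)^n - (-b)^n = (-1)^n * ((b-a)^n - b^n) := by
        rw [show a-b = -(b-a) by ring, neg_pow, neg_pow]; ring
      have hle : (b-a)^n ≤ b^n := pow_le_pow_left₀ (by linarith) (by linarith) n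
      rw [h, key1, abs_mul, abs_pow, abs_neg, abs_one, one_pow, one_mul, abs_sub_comm,
        abs_of_nonneg (by linarith)]
      nlinarith [pow_nonneg (sub_nonneg.2 hab) n]
    obtain ⟨φ₀, -, hφ⟩ := intermediate_value_Icc' Real.pi_pos.le hcont.continuousOn ⟨hfpi, hf0⟩
    set z : ℂ := Complex.exp (φ₀ * Complex.I) with hzdef
    have hz : ‖z‖ = 1 := Complex.norm_exp_ofReal_mul_I φ₀
    set F : ℂ := ((a:ℂ) + b*z)^n - ((b:ℂ)*z)^n with hFdef
    have hF : ‖F‖ = b^n := hφ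
    have hbne : (-(b:ℂ))^n ≠ 0 :=
      pow_ne_zero n (neg_ne_zero.2 (Complex.ofReal_ne_zero.2 hb0.ne'))
    set g : Fin 2 → ℂ := fun j => if j = 0 then (a:ℂ) else (b:ℂ)*z with hg
    refine ⟨fun x => if x = (fun _ => 1) then -(F / (-(b:ℂ))^n)
      else ∏ i, (if x i = 0 then (1:ℂ) else -z), fun x => ?_, ?_⟩
    · beta_reduce
      by_cases hx : x = fun _ => 1
      · rw [if_pos hx, norm_neg, norm_div, hF, norm_pow, norm_neg,
          Complex.norm_real, Real.norm_eq_abs, abs_of_nonneg hb, div_self hbn.ne']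
      · rw [if_neg hx, norm_prod]
        apply Finset.prod_eq_one
        intro i _
        rcases eq_or_ne (x i) 0 with h | h <;> simp [h, hz]
    · beta_reduce
      rw [← Finset.sum_erase_add _ _ (Finset.mem_univ (fun _ : Fin n => (1:Fin 2)))]
      rw [if_pos rfl]
      have h1 : (∏ _i : Fin n, (if (1:Fin 2) = 0 then (a:ℂ) else (-b:ℂ))) = (-(b:ℂ))^n := by
        simp [Finset.prod_const]
      have h2' : -(F / (-(b:ℂ))^n) * (-(b:ℂ))^n = -F := by
        rw [neg_mul, div_mul_cancel₀ _ hbne]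
      rw [show (∏ i : Fin n, (if (fun _ : Fin n => (1:Fin 2)) i = 0 then (a:ℂ) else (-b:ℂ)))
        = (-(b:ℂ))^n from h1, h2']
      have hrw : ∀ x ∈ Finset.univ.erase (fun _ : Fin n => (1:Fin 2)),
          (if x = (fun _ : Fin n => (1:Fin 2)) then -(F / (-(b:ℂ))^n)
              else ∏ i, (if x i = 0 then (1:ℂ) else -z)) *
            ∏ i, (if x i = 0 then (a:ℂ) else (-b:ℂ)) =
          ∏ i, g (x i) := by
        intro x hx
        rw [if_neg (Finset.ne_of_mem_erase hx), ← Finset.prod_mul_distrib]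
        refine Finset.prod_congr rfl fun i _ => ?_
        rcases eq_or_ne (x i) 0 with h | h <;> simp [h, hg] <;> ring
      rw [Finset.sum_congr rfl hrw]
      have hall : ∑ x : Fin n → Fin 2, ∏ i, g (x i) = ((a:ℂ) + b*z)^n := by
        rw [← Fintype.piFinset_univ, ← Finset.prod_univ_sum]
        simp [Fin.sum_univ_two, Finset.prod_const, hg]
      have hsplit := Finset.sum_erase_add Finset.univ
        (fun x : Fin n → Fin 2 => ∏ i, g (x i))
        (Finset.mem_univ (fun _ : Fin n => (1:Fin 2)))
      beta_reduce at hsplit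
      rw [hall] at hsplit
      have h1n : (∏ _i : Fin n, g 1) = ((b:ℂ)*z)^n := by simp [Finset.prod_const, hg]
      rw [show (∏ i : Fin n, g ((fun _ : Fin n => (1:Fin 2)) i)) = ((b:ℂ)*z)^n from h1n]
        at hsplit
      have herase : ∑ x ∈ Finset.univ.erase (fun _ : Fin n => (1:Fin 2)),
          ∏ i, g (x i) = F := by
        rw [hFdef]; linear_combination hsplit
      rw [herase]; ring

lemma key (n : ℕ) (hn : 1 ≤ n) (a b : ℝ) (ha : 0 ≤ a) (hb : 0 ≤ b)
    (h2a : 2 * a ^ n ≤ (a + b) ^ n) (h2b : 2 * b ^ n ≤ (a + b) ^ n) :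
    ∃ lam : (Fin n → Fin 2) → ℂ, (∀ x, ‖lam x‖ = 1) ∧
      ∑ x : Fin n → Fin 2, lam x * ∏ i, (if x i = 0 then (a : ℂ) else (-b : ℂ)) = 0 := by
  rcases le_total a b with hab | hab
  · exact key_le n hn a b ha hab h2b
  · obtain ⟨μ, hμ1, hμ2⟩ := key_le n hn b a hb hab (by rw [add_comm]; exact h2a)
    have hinv : ∀ v : Fin 2, v + 1 + 1 = v := by decide
    refine ⟨fun x => (-1:ℂ)^n * μ (fun i => x i + 1), fun x => ?_, ?_⟩
    · rw [norm_mul, norm_pow, norm_neg, norm_one, one_pow, one_mul, hμ1]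
    · beta_reduce
      have hbij : Function.Bijective (fun (x : Fin n → Fin 2) i => x i + 1) := by
        have : Function.Involutive (fun (x : Fin n → Fin 2) i => x i + 1) := by
          intro x; funext i; exact hinv (x i)
        exact this.bijective
      rw [← Fintype.sum_bijective (fun (x : Fin n → Fin 2) i => x i + 1) hbij
        (fun x => ((-1:ℂ)^n * μ (fun i => (x i + 1) + 1)) *
          ∏ i, (if x i + 1 = 0 then (a:ℂ) else (-b:ℂ)))
        (fun x => ((-1:ℂ)^n * μ (fun i => x i + 1)) *
          ∏ i, (if x i = 0 then (a:ℂ) else (-b:ℂ))) (fun x => rfl)]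
      have hsimp : ∀ y : Fin n → Fin 2,
          ((-1:ℂ)^n * μ (fun i => (y i + 1) + 1)) *
            ∏ i, (if y i + 1 = 0 then (a:ℂ) else (-b:ℂ)) =
          μ y * ∏ i, (if y i = 0 then (b:ℂ) else (-a:ℂ)) := by
        intro y
        have hμeq : (fun i => (y i + 1) + 1) = y := by
          funext i; exact hinv (y i)
        rw [hμeq]
        have hprod : ∏ i, (if y i + 1 = 0 then (a:ℂ) else (-b:ℂ)) =
            ∏ i, (-1:ℂ) * (if y i = 0 then (b:ℂ) else (-a:ℂ)) := by
          refine Finset.prod_congr rfl fun i _ => ?_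
          have : ∀ v : Fin 2, (if v + 1 = 0 then (a:ℂ) else (-b:ℂ)) =
              (-1:ℂ) * (if v = 0 then (b:ℂ) else (-a:ℂ)) := by
            intro v; fin_cases v <;> simp
          exact this (y i)
        rw [hprod, Finset.prod_mul_distrib, Finset.prod_const, Finset.card_univ,
          Fintype.card_fin]
        have hsq : ((-1:ℂ))^n * ((-1:ℂ))^n = 1 := by
          rw [← pow_add, ← two_mul, pow_mul]; norm_num
        linear_combination (μ y * ∏ i, (if y i = 0 then (b:ℂ) else (-a:ℂ))) * hsq
      rw [Finset.sum_congr rfl (fun y _ => hsimp y)]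
      exact hμ2


/-- For every `n ≥ 1`, `α ∈ (0,1]` and `θ₁ ≤ θ ≤ θ₂` (with
`θ₁ = arctan(√(1/α² − 1)·(2^{1/n} − 1))` and `θ₂ = arctan(√(1/α² − 1)/(2^{1/n} − 1))`), there
exists a positive semidefinite `X` (the Choi matrix of a channel: its partial trace over the
first factor is the identity) with `trace(Q₀^{⊗n}·X) = 0`, i.e. Bob achieves perfect hedging,
winning at least 1 out of `n` parallel repetitions with certainty. -/
theorem stmt0 (n : ℕ) (hn : 1 ≤ n) (α : ℝ) (hα : α ∈ Set.Ioc (0 : ℝ) 1) (θ : ℝ)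
    (hθ1 : Real.arctan (Real.sqrt (1 / α ^ 2 - 1) * ((2 : ℝ) ^ ((1 : ℝ) / n) - 1)) ≤ θ)
    (hθ2 : θ ≤ Real.arctan (Real.sqrt (1 / α ^ 2 - 1) / ((2 : ℝ) ^ ((1 : ℝ) / n) - 1))) :
    ∃ X : Matrix ((Fin n → Fin 2) × (Fin n → Fin 2)) ((Fin n → Fin 2) × (Fin n → Fin 2)) ℂ,
      X.PosSemidef ∧
      (∀ x x' : Fin n → Fin 2,
        ∑ y : Fin n → Fin 2, X (y, x) (y, x') = if x = x' then 1 else 0) ∧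
      Matrix.trace (Q0pow n α θ * X) = 0 := by
  obtain ⟨hα0, hα1⟩ := hα
  set s : ℝ := Real.sqrt (1 / α ^ 2 - 1) with hsdef
  set c : ℝ := (2 : ℝ) ^ ((1 : ℝ) / n) - 1 with hcdef
  have hnR : (0:ℝ) < (n:ℝ) := by exact_mod_cast Nat.pos_of_ne_zero (by omega)
  have hc : 0 < c := by
    have h1 : (1:ℝ) < (2:ℝ) ^ ((1:ℝ)/n) :=
      (Real.one_lt_rpow_iff_of_pos (by norm_num)).2 (Or.inl ⟨by norm_num, by positivity⟩)
    simp only [hcdef]; linarith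
  have hs : 0 ≤ s := Real.sqrt_nonneg _
  clear_value s c
  have hθub : θ < π/2 := lt_of_le_of_lt hθ2 (Real.arctan_lt_pi_div_two _)
  have hθlb : -(π/2) < θ := lt_of_lt_of_le (Real.neg_pi_div_two_lt_arctan _) hθ1
  have hcos : 0 < Real.cos θ := Real.cos_pos_of_mem_Ioo ⟨hθlb, hθub⟩
  have ht1 : s * c ≤ Real.tan θ := by
    rw [← Real.tan_arctan (s * c)]
    exact Real.strictMonoOn_tan.monotoneOn (Real.arctan_mem_Ioo _) ⟨hθlb, hθub⟩ hθ1
  have ht2 : Real.tan θ ≤ s / c := by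
    rw [← Real.tan_arctan (s / c)]
    exact Real.strictMonoOn_tan.monotoneOn ⟨hθlb, hθub⟩ (Real.arctan_mem_Ioo _) hθ2
  have hαs : α * s = Real.sqrt (1 - α ^ 2) := by
    rw [hsdef, ← Real.sqrt_sq hα0.le, ← Real.sqrt_mul (sq_nonneg α)]
    congr 1
    field_simp
    rw [Real.sq_sqrt (sq_nonneg α)]
  set a : ℝ := α * Real.sin θ with hadef
  set b : ℝ := Real.sqrt (1 - α ^ 2) * Real.cos θ with hbdef
  have hb : 0 ≤ b := mul_nonneg (Real.sqrt_nonneg _) hcos.le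
  clear_value a b
  have htan : Real.tan θ = Real.sin θ / Real.cos θ := Real.tan_eq_sin_div_cos θ
  have hcb : c * b ≤ a := by
    have h1 : s * c * Real.cos θ ≤ Real.sin θ := by
      rw [htan] at ht1
      exact (le_div_iff₀ hcos).1 ht1
    have h2 : α * (s * c * Real.cos θ) ≤ α * Real.sin θ :=
      mul_le_mul_of_nonneg_left h1 hα0.le
    calc c * b = α * s * Real.cos θ * c := by rw [hbdef, ← hαs]; ring
    _ ≤ a := by rw [hadef]; nlinarith [h2]
  have hca : c * a ≤ b := by
    have h1 : Real.sin θ * c ≤ s * Real.cos θ := by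
      rw [htan] at ht2
      exact (div_le_div_iff₀ hcos hc).1 ht2
    have h2 : α * (Real.sin θ * c) ≤ α * (s * Real.cos θ) :=
      mul_le_mul_of_nonneg_left h1 hα0.le
    calc c * a = α * (Real.sin θ * c) := by rw [hadef]; ring
    _ ≤ α * (s * Real.cos θ) := h2
    _ = b := by rw [hbdef, ← hαs]; ring
  have ha : 0 ≤ a := le_trans (mul_nonneg hc.le hb) hcb
  have hpow : ∀ t : ℝ, 0 ≤ t → (t * (2:ℝ) ^ ((1:ℝ)/n)) ^ n = 2 * t ^ n := by
    intro t ht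
    rw [mul_pow, ← Real.rpow_natCast ((2:ℝ) ^ ((1:ℝ)/n)) n,
      ← Real.rpow_mul (by norm_num : (0:ℝ) ≤ 2), one_div,
      inv_mul_cancel₀ (ne_of_gt hnR), Real.rpow_one]
    ring
  have h2b : 2 * b ^ n ≤ (a + b) ^ n := by
    have h1 : b * (2:ℝ) ^ ((1:ℝ)/n) ≤ a + b := by
      have : b * (2:ℝ) ^ ((1:ℝ)/n) = b + c * b := by rw [hcdef]; ring
      linarith
    calc 2 * b ^ n = (b * (2:ℝ) ^ ((1:ℝ)/n)) ^ n := (hpow b hb).symm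
    _ ≤ (a + b) ^ n := pow_le_pow_left₀ (by positivity) h1 n
  have h2a : 2 * a ^ n ≤ (a + b) ^ n := by
    have h1 : a * (2:ℝ) ^ ((1:ℝ)/n) ≤ a + b := by
      have : a * (2:ℝ) ^ ((1:ℝ)/n) = a + c * a := by rw [hcdef]; ring
      linarith
    calc 2 * a ^ n = (a * (2:ℝ) ^ ((1:ℝ)/n)) ^ n := (hpow a ha).symm
    _ ≤ (a + b) ^ n := pow_le_pow_left₀ (by positivity) h1 n
  obtain ⟨lam, hlam1, hlam2⟩ := key n hn a b ha hb h2a h2b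
  have hQ0 : ∀ y y' : Fin 2, Q0 α θ (y, y) (y', y') =
      (if y = 0 then (a:ℂ) else (-b:ℂ)) * (if y' = 0 then (a:ℂ) else (-b:ℂ)) := by
    intro y y'
    fin_cases y <;> fin_cases y' <;>
      simp [Q0, psi1, psi2, psi3, Complex.conj_ofReal, hadef, hbdef, Prod.ext_iff,
        -Complex.ofReal_sin, -Complex.ofReal_cos, -Complex.ofReal_mul, -Complex.ofReal_neg] <;>
      push_cast <;> ring
  refine ⟨Matrix.of (fun p q => (if p.1 = p.2 then lam p.2 else 0) *
      (starRingEnd ℂ) (if q.1 = q.2 then lam q.2 else 0)), ?_, ?_, ?_⟩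
  · -- positive semidefinite
    have heq : (Matrix.of (fun (p q : (Fin n → Fin 2) × (Fin n → Fin 2)) =>
        (if p.1 = p.2 then lam p.2 else 0) *
          (starRingEnd ℂ) (if q.1 = q.2 then lam q.2 else 0))) =
        Matrix.conjTranspose (Matrix.of fun (_ : Fin 1)
            (p : (Fin n → Fin 2) × (Fin n → Fin 2)) =>
          (starRingEnd ℂ) (if p.1 = p.2 then lam p.2 else 0)) *
        (Matrix.of fun (_ : Fin 1) (p : (Fin n → Fin 2) × (Fin n → Fin 2)) =>
          (starRingEnd ℂ) (if p.1 = p.2 then lam p.2 else 0)) := by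
      ext p q
      simp [Matrix.mul_apply, Matrix.conjTranspose_apply]
    rw [heq]
    exact Matrix.posSemidef_conjTranspose_mul_self _
  · -- partial trace is the identity
    intro x x'
    by_cases hxx : x = x'
    · subst hxx
      rw [if_pos rfl, Finset.sum_eq_single x]
      · simp only [Matrix.of_apply, if_pos rfl]
        rw [Complex.mul_conj, Complex.normSq_eq_norm_sq]
        simp [hlam1 x]
      · intro y _ hy
        simp [Matrix.of_apply, hy]
      · intro h; exact absurd (Finset.mem_univ x) h
    · rw [if_neg hxx]
      apply Finset.sum_eq_zero
      intro y _
      rcases eq_or_ne y x with rfl | hy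
      · have : ¬(y = x') := fun h => hxx h
        simp [Matrix.of_apply, this]
      · simp [Matrix.of_apply, hy]
  · -- the trace vanishes
    have hstep : ∀ p q : (Fin n → Fin 2) × (Fin n → Fin 2),
        Q0pow n α θ p q * ((if q.1 = q.2 then lam q.2 else 0) *
          (starRingEnd ℂ) (if p.1 = p.2 then lam p.2 else 0)) =
        (if p.1 = p.2 then (starRingEnd ℂ) (lam p.2) *
            ∏ i, (if p.2 i = 0 then (a:ℂ) else (-b:ℂ)) else 0) *
        (if q.1 = q.2 then lam q.2 *
            ∏ i, (if q.2 i = 0 then (a:ℂ) else (-b:ℂ)) else 0) := by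
      intro p q
      by_cases hp : p.1 = p.2
      · by_cases hq : q.1 = q.2
        · rw [if_pos hp, if_pos hq, if_pos hp, if_pos hq]
          have hQ : Q0pow n α θ p q =
              (∏ i, (if p.2 i = 0 then (a:ℂ) else (-b:ℂ))) *
              (∏ i, (if q.2 i = 0 then (a:ℂ) else (-b:ℂ))) := by
            rw [Q0pow, Matrix.of_apply, ← Finset.prod_mul_distrib]
            refine Finset.prod_congr rfl fun i _ => ?_
            rw [hp, hq, hQ0]
          rw [hQ]; ring
        · simp [hq]
      · simp [hp]
    calc Matrix.trace (Q0pow n α θ * Matrix.of (fun p q => (if p.1 = p.2 then lam p.2 else 0) *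
          (starRingEnd ℂ) (if q.1 = q.2 then lam q.2 else 0)))
        = ∑ p : (Fin n → Fin 2) × (Fin n → Fin 2), ∑ q : (Fin n → Fin 2) × (Fin n → Fin 2),
            Q0pow n α θ p q * ((if q.1 = q.2 then lam q.2 else 0) *
              (starRingEnd ℂ) (if p.1 = p.2 then lam p.2 else 0)) := by
          simp [Matrix.trace, Matrix.mul_apply]
    _ = ∑ p : (Fin n → Fin 2) × (Fin n → Fin 2), ∑ q : (Fin n → Fin 2) × (Fin n → Fin 2),
          (if p.1 = p.2 then (starRingEnd ℂ) (lam p.2) *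
              ∏ i, (if p.2 i = 0 then (a:ℂ) else (-b:ℂ)) else 0) *
          (if q.1 = q.2 then lam q.2 *
              ∏ i, (if q.2 i = 0 then (a:ℂ) else (-b:ℂ)) else 0) := by
          exact Finset.sum_congr rfl fun p _ => Finset.sum_congr rfl fun q _ => hstep p q
    _ = (∑ p : (Fin n → Fin 2) × (Fin n → Fin 2),
          (if p.1 = p.2 then (starRingEnd ℂ) (lam p.2) *
              ∏ i, (if p.2 i = 0 then (a:ℂ) else (-b:ℂ)) else 0)) *
        (∑ q : (Fin n → Fin 2) × (Fin n → Fin 2),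
          (if q.1 = q.2 then lam q.2 *
              ∏ i, (if q.2 i = 0 then (a:ℂ) else (-b:ℂ)) else 0)) := by
          rw [← Finset.sum_mul_sum]
    _ = (∑ u : Fin n → Fin 2, (starRingEnd ℂ) (lam u) *
            ∏ i, (if u i = 0 then (a:ℂ) else (-b:ℂ))) *
        (∑ w : Fin n → Fin 2, lam w *
            ∏ i, (if w i = 0 then (a:ℂ) else (-b:ℂ))) := by
          congr 1 <;>
          · rw [Fintype.sum_prod_type]
            simp [Finset.sum_ite_eq]
    _ = 0 := by rw [hlam2, mul_zero]
end

section
/- For every integer n ≥ 1, the function h : (0,1] → ℝ defined by h(α) = arctan(√(1/α² − 1)/(2^{1/n} − 1)) − arctan(√(1/α² − 1)·(2^{1/n} − 1)) attains its maximum at α = 1/√2; that is, for all α ∈ (0,1], h(α) ≤ h(1/√2). In other words, the range of measurement angles θ₂ − θ₁ for which perfect hedging occurs is largest when Alice prepares the maximally entangled state. -/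
/-- The lower endpoint `θ₁ = arctan(√(1/α² − 1)·(2^{1/n} − 1))` of the perfect hedging
interval of measurement angles. -/
noncomputable def theta1 (n : ℕ) (α : ℝ) : ℝ :=
  Real.arctan (Real.sqrt (1 / α ^ 2 - 1) * ((2 : ℝ) ^ ((1 : ℝ) / n) - 1))

/-- The upper endpoint `θ₂ = arctan(√(1/α² − 1)/(2^{1/n} − 1))` of the perfect hedging
interval of measurement angles. -/
noncomputable def theta2 (n : ℕ) (α : ℝ) : ℝ :=
  Real.arctan (Real.sqrt (1 / α ^ 2 - 1) / ((2 : ℝ) ^ ((1 : ℝ) / n) - 1))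

lemma arctan_sub_eq {x y : ℝ} (h : -(x * y) < 1) :
    Real.arctan x - Real.arctan y = Real.arctan ((x - y) / (1 + x * y)) := by
  have := Real.arctan_add (x := x) (y := -y) (by simpa [mul_comm] using h)
  rw [Real.arctan_neg] at this
  rw [sub_eq_add_neg, this]
  ring_nf

lemma key_s1 {c s : ℝ} (hc : 0 < c) (hc1 : c ≤ 1) (hs : 0 ≤ s) :
    Real.arctan (s / c) - Real.arctan (s * c) ≤
      Real.arctan (1 / c) - Real.arctan c := by
  have h1 : -((s / c) * (s * c)) < 1 := by
    have : (s / c) * (s * c) = s ^ 2 := by field_simp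
    rw [this]; nlinarith [sq_nonneg s]
  have h2 : -((1 / c) * c) < 1 := by
    rw [one_div, inv_mul_cancel₀ hc.ne']; norm_num
  rw [arctan_sub_eq h1]
  have h2' : Real.arctan (1 / c) - Real.arctan c
      = Real.arctan ((1 / c - c) / (1 + (1 / c) * c)) := arctan_sub_eq h2
  rw [h2']
  apply Real.arctan_strictMono.monotone
  have hsc : (s / c) * (s * c) = s ^ 2 := by field_simp
  rw [hsc, one_div, inv_mul_cancel₀ hc.ne']
  rw [div_le_div_iff₀ (by positivity) (by norm_num)]
  have hc2 : c ^ 2 ≤ 1 := by nlinarith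
  have key2 : 0 ≤ (1 - c ^ 2) * (s - 1) ^ 2 :=
    mul_nonneg (by linarith) (sq_nonneg _)
  have hce := hc.ne'
  field_simp
  nlinarith [key2, mul_pos hc hc]

/-- For every integer `n ≥ 1`, the function `h : (0,1] → ℝ` given by
`h(α) = θ₂ − θ₁` (the length of the interval of measurement angles for which perfect hedging
occurs) attains its maximum at `α = 1/√2`, i.e. for the maximally entangled state. -/
theorem stmt1 (n : ℕ) (hn : 1 ≤ n) :
    ∀ α ∈ Set.Ioc (0 : ℝ) 1,
      theta2 n α - theta1 n α ≤ theta2 n (1 / Real.sqrt 2) - theta1 n (1 / Real.sqrt 2) := by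
  intro α hα
  have hcdef : True := trivial
  have hn0 : (0 : ℝ) < 1 / n := by positivity
  have hc : 0 < (2 : ℝ) ^ ((1 : ℝ) / n) - 1 := by
    have : (1 : ℝ) < (2 : ℝ) ^ ((1 : ℝ) / n) :=
      (Real.one_lt_rpow_iff_of_pos (by norm_num)).2 (Or.inl ⟨by norm_num, hn0⟩)
    linarith
  have hc1 : (2 : ℝ) ^ ((1 : ℝ) / n) - 1 ≤ 1 := by
    have : (2 : ℝ) ^ ((1 : ℝ) / n) ≤ (2 : ℝ) ^ (1 : ℝ) := by
      apply Real.rpow_le_rpow_of_exponent_le (by norm_num)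
      rw [div_le_one (by exact_mod_cast hn)]
      exact_mod_cast hn
    rw [Real.rpow_one] at this
    linarith
  have hsqrt2 : Real.sqrt (1 / (1 / Real.sqrt 2) ^ 2 - 1) = 1 := by
    have h2 : Real.sqrt 2 ^ 2 = 2 := Real.sq_sqrt (by norm_num)
    rw [div_pow, one_pow, h2]
    norm_num
  have hs : 0 ≤ Real.sqrt (1 / α ^ 2 - 1) := Real.sqrt_nonneg _
  have := key_s1 (s := Real.sqrt (1 / α ^ 2 - 1)) hc hc1 hs
  simp only [theta1, theta2]
  rw [hsqrt2, one_mul]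
  exact this
end

section
/- Let n ≥ 1 be an integer, α ∈ (0,1], and let θ ∈ [0, π/2) satisfy tan θ = √(1/α² − 1)·(2^{1/n} − 1). Define c : (Fin n → Fin 2) → ℂ by c(r) = (−1)^{∧r + ⊕r}, where ∧r = 1 if all bits of r equal 1 and ∧r = 0 otherwise, and ⊕r is the parity (XOR) of the bits of r. Let X be the matrix indexed by (Fin n → Fin 2) × (Fin n → Fin 2) with entries X((y,x),(y',x')) = (if y = x then c(x) else 0) · conj(if y' = x' then c(x') else 0), i.e., the Choi matrix of the diagonal unitary channel Φ₁ with diagonal entries c(r). Then X is positive semidefinite, its partial trace over the first factor equals the identity (for all x, x': Σ_y X((y,x),(y,x')) = if x = x' then 1 else 0), and trace(Q₀^{⊗n} · X) = 0; i.e., Φ₁ is a perfect hedging strategy for winning 1 out of n repetitions at θ = θ₁. -/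
open scoped BigOperators ComplexOrder

/-- The Hamming weight (number of ones) of a bit string `r : Fin n → Fin 2`. -/
def bitWeight {n : ℕ} (r : Fin n → Fin 2) : ℕ := ∑ i, (r i : ℕ)

/-- The diagonal entries `c(r) = (−1)^{∧r + ⊕r}` of the strategy `Φ₁`, where `∧r` is the AND
of the bits of `r` and `⊕r` their XOR (parity). -/
def phi1diag {n : ℕ} (r : Fin n → Fin 2) : ℂ :=
  (-1 : ℂ) ^ ((if ∀ i, r i = 1 then 1 else 0) + bitWeight r)

/-- The Choi matrix of the diagonal unitary channel with diagonal entries `c`. -/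
noncomputable def choiDiag {n : ℕ} (c : (Fin n → Fin 2) → ℂ) :
    Matrix ((Fin n → Fin 2) × (Fin n → Fin 2)) ((Fin n → Fin 2) × (Fin n → Fin 2)) ℂ :=
  Matrix.of fun p q =>
    (if p.1 = p.2 then c p.2 else 0) * (starRingEnd ℂ) (if q.1 = q.2 then c q.2 else 0)

/-- Let `n ≥ 1`, `α ∈ (0,1]`, and `θ ∈ [0, π/2)` with
`tan θ = √(1/α² − 1)·(2^{1/n} − 1)`. Then the Choi matrix `X` of the diagonal unitary channel
`Φ₁` with diagonal entries `c(r) = (−1)^{∧r + ⊕r}` is positive semidefinite, has partial trace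
over the first factor equal to the identity, and satisfies `trace(Q₀^{⊗n}·X) = 0`: `Φ₁` is a
perfect hedging strategy for winning 1 out of `n` repetitions at `θ = θ₁`. -/
theorem stmt2 (n : ℕ) (hn : 1 ≤ n) (α : ℝ) (hα : α ∈ Set.Ioc (0 : ℝ) 1) (θ : ℝ)
    (hθ : θ ∈ Set.Ico (0 : ℝ) (Real.pi / 2))
    (ht : Real.tan θ = Real.sqrt (1 / α ^ 2 - 1) * ((2 : ℝ) ^ ((1 : ℝ) / n) - 1)) :
    (choiDiag (phi1diag (n := n))).PosSemidef ∧
    (∀ x x' : Fin n → Fin 2,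
      ∑ y : Fin n → Fin 2, choiDiag (phi1diag (n := n)) (y, x) (y, x')
        = if x = x' then 1 else 0) ∧
    Matrix.trace (Q0pow n α θ * choiDiag (phi1diag (n := n))) = 0 := by
  classical
  refine ⟨?_, ?_, ?_⟩
  · -- positive semidefinite
    set A : Matrix ((Fin n → Fin 2) × (Fin n → Fin 2)) Unit ℂ :=
      Matrix.of (fun p _ => if p.1 = p.2 then phi1diag p.2 else 0) with hA
    have h : choiDiag (phi1diag (n := n)) = A * A.conjTranspose := by
      ext p q
      simp [Matrix.mul_apply, Matrix.conjTranspose_apply, choiDiag, hA]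
    rw [h]
    exact Matrix.posSemidef_self_mul_conjTranspose _
  · -- partial trace is the identity
    intro x x'
    rcases eq_or_ne x x' with h | h
    · subst h
      rw [Finset.sum_eq_single x]
      · simp only [choiDiag, Matrix.of_apply, if_true, ite_true, eq_self_iff_true]
        simp only [phi1diag, map_pow, map_neg, map_one]
        rw [← mul_pow]; norm_num
      · intro y _ hy; simp [choiDiag, hy]
      · simp
    · rw [Finset.sum_eq_zero, if_neg h]
      intro y _
      rcases eq_or_ne y x with h1 | h1
      · subst h1; simp [choiDiag, h]
      · simp [choiDiag, h1]
  · -- the trace vanishes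
    have hα0 : α ≠ 0 := ne_of_gt hα.1
    have hcos : 0 < Real.cos θ := by
      apply Real.cos_pos_of_mem_Ioo
      constructor
      · have := Real.pi_pos; linarith [hθ.1]
      · exact hθ.2
    have hsin : Real.sin θ = Real.tan θ * Real.cos θ := by
      rw [Real.tan_eq_sin_div_cos]; field_simp
    have hαsq : α * Real.sqrt (1 / α ^ 2 - 1) = Real.sqrt (1 - α ^ 2) := by
      conv_lhs => rw [← Real.sqrt_sq hα.1.le]
      rw [← Real.sqrt_mul (sq_nonneg α)]
      congr 1
      field_simp
      rw [Real.sq_sqrt (sq_nonneg α)]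
    have hs : α * Real.sin θ
        = Real.sqrt (1 - α ^ 2) * Real.cos θ * ((2 : ℝ) ^ ((1 : ℝ) / n) - 1) := by
      calc α * Real.sin θ
          = (α * Real.sqrt (1 / α ^ 2 - 1)) * ((2 : ℝ) ^ ((1 : ℝ) / n) - 1) * Real.cos θ := by
            rw [hsin, ht]; ring
        _ = Real.sqrt (1 - α ^ 2) * Real.cos θ * ((2 : ℝ) ^ ((1 : ℝ) / n) - 1) := by
            rw [hαsq]; ring
    have hn0 : (n : ℝ) ≠ 0 := Nat.cast_ne_zero.mpr (by omega)
    have h2 : ((2 : ℝ) ^ ((1 : ℝ) / n)) ^ n = 2 := by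
      rw [← Real.rpow_natCast ((2 : ℝ) ^ ((1 : ℝ) / n)) n,
        ← Real.rpow_mul (by norm_num : (0:ℝ) ≤ 2), one_div, inv_mul_cancel₀ hn0, Real.rpow_one]
    have hkey : (α * Real.sin θ + Real.sqrt (1 - α ^ 2) * Real.cos θ) ^ n
        = 2 * (Real.sqrt (1 - α ^ 2) * Real.cos θ) ^ n := by
      rw [hs, show Real.sqrt (1 - α ^ 2) * Real.cos θ * ((2 : ℝ) ^ ((1 : ℝ) / n) - 1)
          + Real.sqrt (1 - α ^ 2) * Real.cos θ
          = Real.sqrt (1 - α ^ 2) * Real.cos θ * (2 : ℝ) ^ ((1 : ℝ) / n) by ring,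
        mul_pow, h2]
      ring
    -- the vanishing sum S = (s+t)^n - 2 t^n = 0
    have hS : (∑ x : Fin n → Fin 2, (∏ i, psi1 α θ (x i, x i)) * phi1diag x) = 0 := by
      have hsplit : ∀ x : Fin n → Fin 2,
          (∏ i, psi1 α θ (x i, x i)) * phi1diag x
            = (∏ i, psi1 α θ (x i, x i) * (-1 : ℂ) ^ (x i : ℕ))
              - (if x = (fun _ => 1) then
                  2 * ∏ i, psi1 α θ (x i, x i) * (-1 : ℂ) ^ (x i : ℕ) else 0) := by
        intro x
        have hw : (∏ i, psi1 α θ (x i, x i) * (-1 : ℂ) ^ (x i : ℕ))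
            = (∏ i, psi1 α θ (x i, x i)) * (-1 : ℂ) ^ bitWeight x := by
          rw [Finset.prod_mul_distrib, Finset.prod_pow_eq_pow_sum]
          rfl
        rw [hw, phi1diag]
        rcases eq_or_ne x (fun _ => 1) with h | h
        · rw [if_pos h, if_pos (fun i => by rw [h]), pow_add, pow_one]
          ring
        · rw [if_neg h, if_neg (fun hall => h (funext hall)), pow_add, pow_zero]
          ring
      rw [Finset.sum_congr rfl fun x _ => hsplit x, Finset.sum_sub_distrib]
      have hfirst : (∑ x : Fin n → Fin 2, ∏ i, psi1 α θ (x i, x i) * (-1 : ℂ) ^ (x i : ℕ))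
          = (((α * Real.sin θ : ℝ) : ℂ)
              + ((Real.sqrt (1 - α ^ 2) * Real.cos θ : ℝ) : ℂ)) ^ n := by
        rw [← Fintype.prod_sum
          (fun (_ : Fin n) (b : Fin 2) => psi1 α θ (b, b) * (-1 : ℂ) ^ (b : ℕ))]
        rw [Finset.prod_const]
        congr 1
        · simp [Fin.sum_univ_two, psi1]
        · simp
      have hsecond : (∑ x : Fin n → Fin 2, if x = (fun _ => 1) then
            2 * ∏ i, psi1 α θ (x i, x i) * (-1 : ℂ) ^ (x i : ℕ) else 0)
          = 2 * ((Real.sqrt (1 - α ^ 2) * Real.cos θ : ℝ) : ℂ) ^ n := by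
        rw [Finset.sum_ite_eq' Finset.univ (fun _ => 1)
          (fun x => 2 * ∏ i, psi1 α θ (x i, x i) * (-1 : ℂ) ^ (x i : ℕ)),
          if_pos (Finset.mem_univ _)]
        congr 1
        rw [show (∏ i : Fin n, psi1 α θ (1, 1) * (-1 : ℂ) ^ ((1 : Fin 2) : ℕ))
          = (((Real.sqrt (1 - α ^ 2) * Real.cos θ : ℝ) : ℂ)) ^ n by
            simp [psi1, Finset.prod_const]]
      rw [hfirst, hsecond]
      have h := congrArg (Complex.ofReal) hkey
      rw [Complex.ofReal_pow, Complex.ofReal_mul, Complex.ofReal_pow, Complex.ofReal_add,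
        Complex.ofReal_ofNat] at h
      linear_combination h
    -- diagonal factorization of Q0pow
    have hQ : ∀ x x' : Fin n → Fin 2, Q0pow n α θ (x, x) (x', x')
        = (∏ i, psi1 α θ (x i, x i)) * (starRingEnd ℂ) (∏ i, psi1 α θ (x' i, x' i)) := by
      have hd : ∀ a b : Fin 2, Q0 α θ (a, a) (b, b)
          = psi1 α θ (a, a) * (starRingEnd ℂ) (psi1 α θ (b, b)) := by
        have h2' : ∀ a : Fin 2, psi2 α θ (a, a) = 0 := by
          intro a; fin_cases a <;> simp [psi2, Prod.ext_iff]
        have h3' : ∀ a : Fin 2, psi3 α θ (a, a) = 0 := by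
          intro a; fin_cases a <;> simp [psi3, Prod.ext_iff]
        intro a b
        simp [Q0, h2', h3']
      intro x x'
      simp only [Q0pow, Matrix.of_apply]
      rw [Finset.prod_congr rfl fun i _ => hd (x i) (x' i), Finset.prod_mul_distrib,
        ← map_prod]
    have hcreal : ∀ r : Fin n → Fin 2, (starRingEnd ℂ) (phi1diag r) = phi1diag r := by
      intro r; simp [phi1diag]
    -- trace expansion
    have htr : Matrix.trace (Q0pow n α θ * choiDiag (phi1diag (n := n)))
        = ∑ x : Fin n → Fin 2, ∑ x' : Fin n → Fin 2,
            Q0pow n α θ (x, x) (x', x')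
              * (phi1diag x' * (starRingEnd ℂ) (phi1diag x)) := by
      rw [Matrix.trace]
      simp only [Matrix.diag_apply, Matrix.mul_apply, choiDiag, Matrix.of_apply,
        apply_ite (starRingEnd ℂ), map_zero, mul_ite, mul_zero, ite_mul, zero_mul]
      rw [Fintype.sum_prod_type]
      simp only [Fintype.sum_prod_type]
      simp [Finset.sum_ite_eq, Finset.sum_ite_eq', mul_comm, mul_assoc, mul_left_comm]
    have hfin : Matrix.trace (Q0pow n α θ * choiDiag (phi1diag (n := n)))
        = (∑ x : Fin n → Fin 2, (∏ i, psi1 α θ (x i, x i)) * phi1diag x)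
          * (∑ x' : Fin n → Fin 2,
              (starRingEnd ℂ) (∏ i, psi1 α θ (x' i, x' i)) * phi1diag x') := by
      rw [htr, Finset.sum_mul_sum]
      refine Finset.sum_congr rfl fun x _ => Finset.sum_congr rfl fun x' _ => ?_
      rw [hQ x x', hcreal x]
      ring
    rw [hfin, hS, zero_mul]
end

section
/- Let n ≥ 1 be an integer, α ∈ (0,1], and θ with arctan(√(1/α² − 1)·(2^{1/n} − 1)) ≤ θ ≤ arctan(√(1/α² − 1)/(2^{1/n} − 1)). Then there exists a function c : (Fin n → Fin 2) → ℂ with |c(r)| = 1 for every bit string r, such that Σ over all r ∈ (Fin n → Fin 2) of c(r)·(α·sin θ)^{n−|r|}·(√(1−α²)·cos θ)^{|r|} = 0. Equivalently, there is a diagonal unitary strategy for Bob (with diagonal entries of modulus one) under which the amplitude for losing all n parallel repetitions vanishes, i.e., Bob achieves perfect hedging of 1 out of n repetitions. -/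
open scoped BigOperators

section Aux
open Finset

lemma bitWeight_le {n : ℕ} (r : Fin n → Fin 2) : bitWeight r ≤ n := by
  calc bitWeight r ≤ ∑ _i : Fin n, 1 :=
        Finset.sum_le_sum (fun i _ => Fin.is_le (r i))
    _ = n := by simp

def cls (n k : ℕ) : Finset (Fin n → Fin 2) := Finset.univ.filter (fun r => bitWeight r = k)

lemma cls_zero (n : ℕ) : cls n 0 = {fun _ => 0} := by
  ext r
  simp only [cls, mem_filter, mem_univ, true_and, mem_singleton, bitWeight,
    Finset.sum_eq_zero_iff, mem_univ, true_implies]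
  constructor
  · intro h; funext i
    have : (r i : ℕ) = 0 := h i
    exact Fin.ext (by simpa using this)
  · intro h; subst h; intro i; simp

lemma cls_last (n : ℕ) : cls n n = {fun _ => 1} := by
  ext r
  simp only [cls, mem_filter, mem_univ, true_and, mem_singleton]
  constructor
  · intro h; funext i
    by_contra hne
    have hv : (r i : ℕ) < 1 := by
      have h2 := Fin.is_le (r i)
      have h3 : (r i : ℕ) ≠ 1 := fun hc => hne (Fin.ext (by simpa using hc))
      omega
    have hlt : bitWeight r < ∑ _i : Fin n, 1 :=
      Finset.sum_lt_sum (fun j _ => Fin.is_le (r j)) ⟨i, mem_univ i, hv⟩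
    simp only [Finset.sum_const, card_univ, Fintype.card_fin, smul_eq_mul, mul_one] at hlt
    omega
  · intro h; subst h; simp [bitWeight]

lemma two_le_card_cls (n k : ℕ) (hk1 : 1 ≤ k) (hkn : k < n) : 2 ≤ (cls n k).card := by
  set r1 : Fin n → Fin 2 := fun i => if (i : ℕ) < k then 1 else 0 with hr1
  have hW1 : bitWeight r1 = k := by
    have h0 : bitWeight r1 = (Finset.univ.filter (fun i : Fin n => (i : ℕ) < k)).card := by
      simp only [bitWeight, hr1, apply_ite (Fin.val), Fin.val_one, Fin.val_zero]
      rw [Finset.card_filter]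
    rw [h0]
    have h1 : (Finset.univ.filter (fun i : Fin n => (i : ℕ) < k)) = Finset.Iio ⟨k, hkn⟩ := by
      ext i; simp [Fin.lt_def]
    rw [h1, Fin.card_Iio]
  have hk1n : k - 1 < n := by omega
  set σ : Equiv.Perm (Fin n) := Equiv.swap ⟨k - 1, hk1n⟩ ⟨k, hkn⟩ with hσ
  set r2 : Fin n → Fin 2 := r1 ∘ σ with hr2
  have hW2 : bitWeight r2 = k := by
    rw [← hW1]; exact Equiv.sum_comp σ (fun i => (r1 i : ℕ))
  have hne : r2 ≠ r1 := by
    intro hc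
    have h1 : r2 ⟨k, hkn⟩ = r1 ⟨k - 1, hk1n⟩ := by
      simp only [hr2, Function.comp_apply, hσ, Equiv.swap_apply_right]
    have h2 : r1 ⟨k - 1, hk1n⟩ = 1 := by simp only [hr1]; simp; omega
    have h3 : r1 ⟨k, hkn⟩ = 0 := by simp only [hr1]; simp
    rw [hc] at h1
    rw [h2, h3] at h1
    exact absurd h1 (by decide)
  have m1 : r1 ∈ cls n k := by simp [cls, hW1]
  have m2 : r2 ∈ cls n k := by simp [cls, hW2]
  exact Finset.one_lt_card.mpr ⟨r2, m2, r1, m1, hne⟩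

lemma sum_one_sub (n : ℕ) (r : Fin n → Fin 2) :
    ∑ i, (1 - (r i : ℕ)) = n - bitWeight r := by
  have h1 : ∑ i, ((1 - (r i : ℕ)) + (r i : ℕ)) = n := by
    have : ∀ i : Fin n, (1 - (r i : ℕ)) + (r i : ℕ) = 1 := by
      intro i; have := Fin.is_le (r i); omega
    simp [this]
  rw [Finset.sum_add_distrib] at h1
  have := bitWeight_le r
  unfold bitWeight at *
  omega

lemma sum_pow_weight {R : Type*} [CommRing R] (n : ℕ) (A B : R) :
    ∑ r : Fin n → Fin 2, A ^ (n - bitWeight r) * B ^ (bitWeight r) = (A + B) ^ n := by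
  have key : ∀ x : Fin 2, (if x = 0 then A else B) = A ^ (1 - (x : ℕ)) * B ^ (x : ℕ) := by
    intro x; fin_cases x <;> simp
  have h1 : (A + B) ^ n = ∏ _i : Fin n, (∑ x : Fin 2, if x = 0 then A else B) := by
    simp [Fin.sum_univ_two]
  rw [h1, Finset.prod_univ_sum]
  rw [Fintype.piFinset_univ]
  apply Finset.sum_congr rfl
  intro r _
  simp only [key]
  rw [Finset.prod_mul_distrib, Finset.prod_pow_eq_pow_sum, Finset.prod_pow_eq_pow_sum,
    sum_one_sub]
  rfl

lemma main_lemma (N : ℕ) (a b : ℝ) (ha : 0 ≤ a) (hb : 0 ≤ b) (hba : b ≤ a)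
    (h2 : 2 * a ^ (N + 1) ≤ (a + b) ^ (N + 1)) :
    ∃ c : (Fin (N + 1) → Fin 2) → ℂ, (∀ r, ‖c r‖ = 1) ∧
      ∑ r : Fin (N + 1) → Fin 2,
        c r * (a : ℂ) ^ (N + 1 - bitWeight r) * (b : ℂ) ^ bitWeight r = 0 := by
  set n := N + 1 with hnN
  -- abbreviations
  set m : ℕ → ℕ := fun k => (cls n k).card with hm
  set p : ℕ → ℕ := fun k => m k / 2 with hp
  set o : ℕ → ℕ := fun k => m k - 2 * p k with ho
  set w : ℕ → ℝ := fun k => a ^ (n - k) * b ^ k with hw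
  set ε : ℕ → ℝ := fun k => if k = 0 then 1 else -1 with hε
  -- choose the subsets P, Q of each weight class
  have hex : ∀ k : ℕ, ∃ P : Finset (Fin n → Fin 2), ∃ Q : Finset (Fin n → Fin 2),
      P ⊆ cls n k ∧ Q ⊆ cls n k \ P ∧ P.card = p k ∧ Q.card = p k := by
    intro k
    obtain ⟨P, hPsub, hPcard⟩ :=
      Finset.exists_subset_card_eq (s := cls n k) (Nat.div_le_self _ _ : p k ≤ (cls n k).card)
    have hle : p k ≤ (cls n k \ P).card := by
      rw [Finset.card_sdiff_of_subset hPsub, hPcard]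
      simp only [hp, hm]
      omega
    obtain ⟨Q, hQsub, hQcard⟩ := Finset.exists_subset_card_eq hle
    exact ⟨P, Q, hPsub, hQsub, hPcard, hQcard⟩
  choose P Q hPsub hQsub hPcard hQcard using hex
  -- basic facts
  have hm0 : m 0 = 1 := by rw [hm]; simp [cls_zero n]
  have hmn : m n = 1 := by rw [hm]; simp [cls_last n]
  have hw_nonneg : ∀ k, 0 ≤ w k := fun k => mul_nonneg (pow_nonneg ha _) (pow_nonneg hb _)
  have ho_le_one : ∀ k, o k ≤ 1 := by intro k; simp only [ho, hp]; omega
  have hm_eq : ∀ k, m k = 2 * p k + o k := by intro k; simp only [ho, hp]; omega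
  have ho_mid : ∀ i, i < N → o (i + 1) ≤ 2 * p (i + 1) := by
    intro i hi
    have h2m : 2 ≤ m (i + 1) := two_le_card_cls n (i + 1) (by omega) (by omega)
    simp only [ho, hp, hm] at h2m ⊢; omega
  -- the three real sums over the middle classes
  set S1 : ℝ := ∑ i ∈ Finset.range N, (o (i + 1) : ℝ) * w (i + 1) with hS1
  set S2 : ℝ := ∑ i ∈ Finset.range N, (p (i + 1) : ℝ) * w (i + 1) with hS2
  have hS1_nonneg : 0 ≤ S1 :=
    Finset.sum_nonneg fun i _ => mul_nonneg (Nat.cast_nonneg _) (hw_nonneg _)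
  have hS2_nonneg : 0 ≤ S2 :=
    Finset.sum_nonneg fun i _ => mul_nonneg (Nat.cast_nonneg _) (hw_nonneg _)
  have hS1_le : S1 ≤ 2 * S2 := by
    rw [hS1, hS2, Finset.mul_sum]
    apply Finset.sum_le_sum
    intro i hi
    have := ho_mid i (Finset.mem_range.mp hi)
    have hwi := hw_nonneg (i + 1)
    have : (o (i + 1) : ℝ) ≤ 2 * (p (i + 1) : ℝ) := by exact_mod_cast this
    nlinarith
  -- the total sum identity
  have htot : ∑ k ∈ Finset.range (n + 1), (m k : ℝ) * w k = (a + b) ^ n := by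
    rw [← sum_pow_weight n a b]
    rw [← Finset.sum_fiberwise_of_maps_to
      (fun r _ => Finset.mem_range.mpr (Nat.lt_succ_of_le (bitWeight_le r)))
      (fun r => a ^ (n - bitWeight r) * b ^ bitWeight r)]
    apply Finset.sum_congr rfl
    intro k _
    have : ∀ r ∈ Finset.univ.filter (fun r : Fin n → Fin 2 => bitWeight r = k),
        a ^ (n - bitWeight r) * b ^ bitWeight r = w k := by
      intro r hr
      have : bitWeight r = k := (Finset.mem_filter.mp hr).2
      rw [hw, this]
    rw [Finset.sum_congr rfl this, Finset.sum_const, nsmul_eq_mul]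
    rfl
  have htot' : 2 * S2 + S1 + a ^ n + b ^ n = (a + b) ^ n := by
    rw [← htot]
    rw [Finset.sum_range_succ, Finset.sum_range_succ']
    have hw0 : w 0 = a ^ n := by rw [hw]; simp
    have hwn : w n = b ^ n := by rw [hw]; simp
    have hmid : ∑ i ∈ Finset.range N, (m (i + 1) : ℝ) * w (i + 1) = 2 * S2 + S1 := by
      rw [hS1, hS2, Finset.mul_sum, ← Finset.sum_add_distrib]
      apply Finset.sum_congr rfl
      intro i _
      rw [hm_eq (i + 1)]
      push_cast
      ring
    have hmn' : m (N + 1) = 1 := hmn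
    rw [hmid, hw0, hwn, hm0, hmn']
    push_cast
    ring
  -- E and W
  set W : ℝ := S2 with hWdef
  set E : ℝ := a ^ n - b ^ n - S1 with hEdef
  have hbn_le : b ^ n ≤ a ^ n := pow_le_pow_left₀ hb hba n
  have hE_le : E ≤ 2 * W := by rw [hEdef, hWdef]; linarith
  have hE_ge : -(2 * W) ≤ E := by rw [hEdef, hWdef]; linarith
  -- choose t₀
  have ht : ∃ t₀ : ℝ, t₀ ^ 2 ≤ 1 ∧ 2 * t₀ * W + E = 0 := by
    rcases eq_or_ne W 0 with hW0 | hW0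
    · refine ⟨0, by norm_num, ?_⟩
      rw [hW0] at hE_le hE_ge
      have : E = 0 := by linarith
      rw [this]; ring
    · have hWpos : 0 < W := lt_of_le_of_ne hS2_nonneg (Ne.symm hW0)
      refine ⟨-E / (2 * W), ?_, by field_simp; linarith⟩
      rw [div_pow, div_le_one (by positivity)]
      nlinarith
  obtain ⟨t₀, ht1, ht2⟩ := ht
  have ht1' : (0:ℝ) ≤ 1 - t₀ ^ 2 := by linarith
  -- the unit complex number u
  set u : ℂ := (t₀ : ℝ) + (Real.sqrt (1 - t₀ ^ 2) : ℝ) * Complex.I with hu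
  have habs_u : ‖u‖ = 1 := by
    rw [hu, Complex.norm_add_mul_I, Real.sq_sqrt ht1']
    norm_num
  have hconj : u + (starRingEnd ℂ) u = ((2 * t₀ : ℝ) : ℂ) := by
    have hre : u.re = t₀ := by rw [hu]; simp
    rw [Complex.add_conj, hre]
  -- the strategy
  set c : (Fin n → Fin 2) → ℂ := fun r =>
    if r ∈ P (bitWeight r) then u
    else if r ∈ Q (bitWeight r) then (starRingEnd ℂ) u
    else ((ε (bitWeight r) : ℝ) : ℂ) with hc
  have habs : ∀ r, ‖c r‖ = 1 := by
    intro r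
    simp only [hc]
    split_ifs with h1 h2
    · exact habs_u
    · rw [Complex.norm_conj]; exact habs_u
    · rw [Complex.norm_real]
      simp only [hε]
      split_ifs <;> norm_num
  -- per-class sums
  have hclass : ∀ k, ∑ r ∈ cls n k,
      c r * (a : ℂ) ^ (n - bitWeight r) * (b : ℂ) ^ bitWeight r
      = (((2 * (p k : ℝ) * t₀ + (o k : ℝ) * ε k) * w k : ℝ) : ℂ) := by
    intro k
    have hcongr : ∀ r ∈ cls n k,
        c r * (a : ℂ) ^ (n - bitWeight r) * (b : ℂ) ^ bitWeight r
        = c r * ((w k : ℝ) : ℂ) := by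
      intro r hr
      have hk : bitWeight r = k := (Finset.mem_filter.mp hr).2
      rw [hk]
      simp only [hw]
      push_cast
      ring
    rw [Finset.sum_congr rfl hcongr, ← Finset.sum_mul]
    have hQP : Q k ⊆ cls n k \ P k := hQsub k
    have hcP : ∀ r ∈ P k, c r = u := by
      intro r hr
      have hk : bitWeight r = k := (Finset.mem_filter.mp (hPsub k hr)).2
      simp only [hc, hk, if_pos hr]
    have hcQ : ∀ r ∈ Q k, c r = (starRingEnd ℂ) u := by
      intro r hr
      have hmem := Finset.mem_sdiff.mp (hQP hr)
      have hk : bitWeight r = k := (Finset.mem_filter.mp hmem.1).2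
      simp only [hc, hk, if_neg hmem.2, if_pos hr]
    have hcR : ∀ r ∈ (cls n k \ P k) \ Q k, c r = ((ε k : ℝ) : ℂ) := by
      intro r hr
      have hmem := Finset.mem_sdiff.mp hr
      have hmem2 := Finset.mem_sdiff.mp hmem.1
      have hk : bitWeight r = k := (Finset.mem_filter.mp hmem2.1).2
      simp only [hc, hk, if_neg hmem2.2, if_neg hmem.2]
    have hsum : ∑ r ∈ cls n k, c r
        = (((cls n k \ P k) \ Q k).card : ℂ) * ((ε k : ℝ) : ℂ)
          + ((Q k).card : ℂ) * (starRingEnd ℂ) u + ((P k).card : ℂ) * u := by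
      rw [← Finset.sum_sdiff (hPsub k), ← Finset.sum_sdiff hQP,
        Finset.sum_congr rfl hcP, Finset.sum_congr rfl hcQ, Finset.sum_congr rfl hcR,
        Finset.sum_const, Finset.sum_const, Finset.sum_const,
        nsmul_eq_mul, nsmul_eq_mul, nsmul_eq_mul]
    have hcard : ((cls n k \ P k) \ Q k).card = o k := by
      rw [Finset.card_sdiff_of_subset hQP, Finset.card_sdiff_of_subset (hPsub k), hPcard, hQcard]
      simp only [ho, hp, hm]
      omega
    rw [hsum, hcard, hPcard, hQcard]
    have : ((p k : ℂ)) * (starRingEnd ℂ) u + ((p k : ℂ)) * u = (p k : ℂ) * ((2 * t₀ : ℝ) : ℂ) := by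
      rw [← hconj]; ring
    calc ((o k : ℂ) * ((ε k : ℝ) : ℂ) + (p k : ℂ) * (starRingEnd ℂ) u + (p k : ℂ) * u)
          * ((w k : ℝ) : ℂ)
        = ((o k : ℂ) * ((ε k : ℝ) : ℂ) + (p k : ℂ) * ((2 * t₀ : ℝ) : ℂ)) * ((w k : ℝ) : ℂ) := by
          rw [← this]; ring
      _ = (((2 * (p k : ℝ) * t₀ + (o k : ℝ) * ε k) * w k : ℝ) : ℂ) := by
          push_cast
          ring
  -- assemble the total sum
  have hcls_eq : ∀ k : ℕ,
      Finset.univ.filter (fun r : Fin n → Fin 2 => bitWeight r = k) = cls n k := fun _ => rfl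
  have htotal : ∑ r : Fin n → Fin 2,
      c r * (a : ℂ) ^ (n - bitWeight r) * (b : ℂ) ^ bitWeight r
      = ((∑ k ∈ Finset.range (n + 1), (2 * (p k : ℝ) * t₀ + (o k : ℝ) * ε k) * w k : ℝ) : ℂ) := by
    rw [← Finset.sum_fiberwise_of_maps_to
      (fun r _ => Finset.mem_range.mpr (Nat.lt_succ_of_le (bitWeight_le r)))
      (fun r => c r * (a : ℂ) ^ (n - bitWeight r) * (b : ℂ) ^ bitWeight r)]
    rw [Complex.ofReal_sum]
    apply Finset.sum_congr rfl
    intro k _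
    rw [hcls_eq k, hclass k]
  have hreal : ∑ k ∈ Finset.range (n + 1), (2 * (p k : ℝ) * t₀ + (o k : ℝ) * ε k) * w k
      = 2 * t₀ * W + E := by
    rw [Finset.sum_range_succ, Finset.sum_range_succ']
    have hp0 : p 0 = 0 := by simp only [hp, hm0]
    have hpn : p (N + 1) = 0 := by
      have : m (N + 1) = 1 := hmn
      simp only [hp, this]
    have hon : o (N + 1) = 1 := by
      have h1 : m (N + 1) = 1 := hmn
      simp only [ho, hp, h1]
    have ho0 : o 0 = 1 := by simp only [ho, hp, hm0]
    have hw0 : w 0 = a ^ n := by rw [hw]; simp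
    have hwn : w (N + 1) = b ^ n := by
      have : w n = b ^ n := by rw [hw]; simp
      exact this
    have hε0 : ε 0 = 1 := by simp [hε]
    have hεn : ε (N + 1) = -1 := by simp [hε]
    have hmid : ∑ i ∈ Finset.range N, (2 * (p (i+1) : ℝ) * t₀ + (o (i+1) : ℝ) * ε (i+1)) * w (i+1)
        = 2 * t₀ * W - S1 := by
      have e1 : ∀ i ∈ Finset.range N,
          (2 * (p (i+1) : ℝ) * t₀ + (o (i+1) : ℝ) * ε (i+1)) * w (i+1)
          = 2 * t₀ * ((p (i+1) : ℝ) * w (i+1)) - (o (i+1) : ℝ) * w (i+1) := by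
        intro i _
        have he : ε (i + 1) = -1 := by simp [hε]
        rw [he]; ring
      rw [Finset.sum_congr rfl e1, Finset.sum_sub_distrib, ← Finset.mul_sum, ← hS2, ← hS1]
    rw [hmid, hp0, hpn, hon, ho0, hw0, hwn, hε0, hεn, hEdef]
    push_cast
    ring
  refine ⟨c, habs, ?_⟩
  rw [htotal, hreal, ht2, Complex.ofReal_zero]

lemma bit_flip_flip : ∀ x : Fin 2, 1 - (1 - x) = x := by decide

lemma bit_cast_sub : ∀ x : Fin 2, ((1 - x : Fin 2) : ℕ) = 1 - (x : ℕ) := by decide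

lemma bitWeight_flip {n : ℕ} (r : Fin n → Fin 2) :
    bitWeight (fun i => 1 - r i) = n - bitWeight r := by
  calc bitWeight (fun i => 1 - r i) = ∑ i, (1 - (r i : ℕ)) :=
        Finset.sum_congr rfl fun i _ => bit_cast_sub (r i)
    _ = n - bitWeight r := sum_one_sub n r

open scoped BigOperators


end Aux

/-- Let `n ≥ 1`, `α ∈ (0,1]`, and
`arctan(√(1/α² − 1)·(2^{1/n} − 1)) ≤ θ ≤ arctan(√(1/α² − 1)/(2^{1/n} − 1))`. Then there is a
function `c` on bit strings with `|c(r)| = 1` for all `r`, such that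
`Σ_r c(r)·(α sin θ)^{n−|r|}·(√(1−α²) cos θ)^{|r|} = 0`; i.e. there is a diagonal unitary
strategy for Bob under which the amplitude of losing all `n` parallel repetitions vanishes. -/
theorem stmt9 (n : ℕ) (hn : 1 ≤ n) (α : ℝ) (hα : α ∈ Set.Ioc (0 : ℝ) 1) (θ : ℝ)
    (hθ1 : Real.arctan (Real.sqrt (1 / α ^ 2 - 1) * ((2 : ℝ) ^ ((1 : ℝ) / n) - 1)) ≤ θ)
    (hθ2 : θ ≤ Real.arctan (Real.sqrt (1 / α ^ 2 - 1) / ((2 : ℝ) ^ ((1 : ℝ) / n) - 1))) :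
    ∃ c : (Fin n → Fin 2) → ℂ,
      (∀ r, ‖c r‖ = 1) ∧
      ∑ r : Fin n → Fin 2,
        c r * ((α * Real.sin θ : ℝ) : ℂ) ^ (n - bitWeight r) *
          ((Real.sqrt (1 - α ^ 2) * Real.cos θ : ℝ) : ℂ) ^ bitWeight r = 0 := by
  obtain ⟨hα0, hα1⟩ := hα
  set a : ℝ := α * Real.sin θ with ha_def
  set b : ℝ := Real.sqrt (1 - α ^ 2) * Real.cos θ with hb_def
  set t : ℝ := Real.sqrt (1 / α ^ 2 - 1) with ht_def
  set s : ℝ := (2 : ℝ) ^ ((1 : ℝ) / n) with hs_def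
  have hnR : (0 : ℝ) < (n : ℝ) := by exact_mod_cast hn
  have ht0 : 0 ≤ t := Real.sqrt_nonneg _
  have hs1 : 1 < s := by
    rw [hs_def]
    rw [Real.one_lt_rpow_iff_of_pos (by norm_num)]
    left
    exact ⟨one_lt_two, by positivity⟩
  have hs0 : 0 < s - 1 := by linarith
  have hθlo : 0 ≤ θ := by
    refine le_trans ?_ hθ1
    rw [← Real.arctan_zero]
    exact Real.arctan_strictMono.monotone (by positivity)
  have hθhalf : θ < Real.pi / 2 := lt_of_le_of_lt hθ2 (Real.arctan_lt_pi_div_two _)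
  have hθgt : -(Real.pi / 2) < θ := lt_of_lt_of_le (Real.neg_pi_div_two_lt_arctan _) hθ1
  have hcos : 0 < Real.cos θ := Real.cos_pos_of_mem_Ioo ⟨hθgt, hθhalf⟩
  have hsin : 0 ≤ Real.sin θ :=
    Real.sin_nonneg_of_nonneg_of_le_pi hθlo (by linarith [Real.pi_pos])
  have hmem : θ ∈ Set.Ioo (-(Real.pi / 2)) (Real.pi / 2) := ⟨hθgt, hθhalf⟩
  have htan_le : Real.tan θ ≤ t / (s - 1) := by
    calc Real.tan θ ≤ Real.tan (Real.arctan (t / (s - 1))) :=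
          Real.strictMonoOn_tan.monotoneOn hmem (Real.arctan_mem_Ioo _) hθ2
      _ = t / (s - 1) := Real.tan_arctan _
  have htan_ge : t * (s - 1) ≤ Real.tan θ := by
    calc t * (s - 1) = Real.tan (Real.arctan (t * (s - 1))) := (Real.tan_arctan _).symm
      _ ≤ Real.tan θ :=
          Real.strictMonoOn_tan.monotoneOn (Real.arctan_mem_Ioo _) hmem hθ1
  have hsqrt : Real.sqrt (1 - α ^ 2) = α * t := by
    rw [ht_def, ← Real.sqrt_sq hα0.le, ← Real.sqrt_mul (sq_nonneg α)]
    congr 1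
    field_simp
    rw [Real.sq_sqrt (sq_nonneg α)]
  have ha : 0 ≤ a := mul_nonneg hα0.le hsin
  have hb : 0 ≤ b := mul_nonneg (Real.sqrt_nonneg _) hcos.le
  have htan : Real.tan θ = Real.sin θ / Real.cos θ := Real.tan_eq_sin_div_cos θ
  have h1 : (s - 1) * a ≤ b := by
    have h' : Real.sin θ * (s - 1) ≤ t * Real.cos θ := by
      rw [htan, div_le_div_iff₀ hcos hs0] at htan_le
      linarith
    rw [ha_def, hb_def, hsqrt]
    calc (s - 1) * (α * Real.sin θ) = α * (Real.sin θ * (s - 1)) := by ring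
      _ ≤ α * (t * Real.cos θ) := by
          exact mul_le_mul_of_nonneg_left h' hα0.le
      _ = α * t * Real.cos θ := by ring
  have h2 : (s - 1) * b ≤ a := by
    have h' : t * (s - 1) * Real.cos θ ≤ Real.sin θ := by
      rw [htan, le_div_iff₀ hcos] at htan_ge
      linarith
    rw [ha_def, hb_def, hsqrt]
    calc (s - 1) * (α * t * Real.cos θ) = α * (t * (s - 1) * Real.cos θ) := by ring
      _ ≤ α * Real.sin θ := mul_le_mul_of_nonneg_left h' hα0.le
  have hspow : s ^ n = 2 := by
    rw [hs_def, ← Real.rpow_natCast ((2:ℝ) ^ ((1:ℝ)/n)) n, ← Real.rpow_mul (by norm_num)]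
    rw [one_div, inv_mul_cancel₀ (ne_of_gt hnR), Real.rpow_one]
  have h2a : 2 * a ^ n ≤ (a + b) ^ n := by
    have hsa : s * a ≤ a + b := by linarith
    have hkey : (s * a) ^ n ≤ (a + b) ^ n := pow_le_pow_left₀ (by positivity) hsa n
    rw [mul_pow, hspow] at hkey
    exact hkey
  have h2b : 2 * b ^ n ≤ (a + b) ^ n := by
    have hsb : s * b ≤ a + b := by linarith
    have hkey : (s * b) ^ n ≤ (a + b) ^ n := pow_le_pow_left₀ (by positivity) hsb n
    rw [mul_pow, hspow] at hkey
    exact hkey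
  obtain ⟨N, rfl⟩ : ∃ N, n = N + 1 := ⟨n - 1, by omega⟩
  rcases le_total b a with hba | hab
  · exact main_lemma N a b ha hb hba h2a
  · obtain ⟨c, hcabs, hcsum⟩ := main_lemma N b a hb ha hab (by rwa [add_comm a b] at h2b)
    refine ⟨fun r => c (fun i => 1 - r i), fun r => hcabs _, ?_⟩
    have hinv : Function.Involutive (fun r : Fin (N+1) → Fin 2 => (fun i => 1 - r i)) := by
      intro r; funext i; exact bit_flip_flip (r i)
    set G : (Fin (N+1) → Fin 2) → ℂ :=
      fun r' => c r' * (a : ℂ) ^ (bitWeight r') * (b : ℂ) ^ (N + 1 - bitWeight r') with hG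
    have hper : ∀ r : Fin (N+1) → Fin 2,
        c (fun i => 1 - r i) * (a : ℂ) ^ (N + 1 - bitWeight r) * (b : ℂ) ^ bitWeight r
        = G (fun i => 1 - r i) := by
      intro r
      rw [hG]
      simp only [bitWeight_flip]
      have hle := bitWeight_le r
      have he : N + 1 - (N + 1 - bitWeight r) = bitWeight r := by omega
      rw [he]
    calc ∑ r : Fin (N+1) → Fin 2,
          c (fun i => 1 - r i) * (a : ℂ) ^ (N + 1 - bitWeight r) * (b : ℂ) ^ bitWeight r
        = ∑ r : Fin (N+1) → Fin 2, G (fun i => 1 - r i) :=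
          Finset.sum_congr rfl fun r _ => hper r
      _ = ∑ r : Fin (N+1) → Fin 2, G r := Function.Bijective.sum_comp hinv.bijective G
      _ = ∑ r : Fin (N+1) → Fin 2,
            c r * (b : ℂ) ^ (N + 1 - bitWeight r) * (a : ℂ) ^ bitWeight r := by
          apply Finset.sum_congr rfl
          intro r _
          rw [hG]
          ring
      _ = 0 := hcsum
end

section
/- Let Y and X be finite nonempty types, let C be a positive semidefinite complex matrix indexed by (Y × X) × (Y × X), and let X₀ be a positive semidefinite matrix over the same index type whose partial trace over Y is the identity: for all x, x', Σ_y X₀((y,x),(y,x')) = if x = x' then 1 else 0. Define the X × X matrix W by W(x, x') = Σ_y (C·X₀)((y,x),(y,x')). If the matrix 1_Y ⊗ W, with entries ((y,x),(y',x')) ↦ (if y = y' then W(x,x') else 0), satisfies 1_Y ⊗ W ≤ C, then X₀ is optimal for the primal semidefinite program: for every positive semidefinite X' over (Y × X) × (Y × X) whose partial trace over Y is the identity, the real number trace(C·X') satisfies trace(C·X') ≥ trace(C·X₀). -/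
open scoped BigOperators ComplexOrder

lemma stmt10_trace_re_nonneg {n : Type*} [Fintype n] {M : Matrix n n ℂ}
    (hM : M.PosSemidef) : 0 ≤ M.trace.re := by
  classical
  have h : ∀ i, 0 ≤ (M i i).re := by
    intro i
    have := hM.re_dotProduct_nonneg (Pi.single i 1)
    simpa [dotProduct, Matrix.mulVec, Pi.single_apply] using this
  simp only [Matrix.trace, Matrix.diag, Complex.re_sum]
  exact Finset.sum_nonneg fun i _ => h i

open scoped MatrixOrder in
lemma stmt10_trace_mul_re_nonneg {n : Type*} [Fintype n] [DecidableEq n]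
    {A B : Matrix n n ℂ} (hA : A.PosSemidef) (hB : B.PosSemidef) :
    0 ≤ (A * B).trace.re := by
  have hsq : A = CFC.sqrt A * CFC.sqrt A := (CFC.sqrt_mul_sqrt_self A hA.nonneg).symm
  have h1 : (A * B).trace = (CFC.sqrt A * B * CFC.sqrt A).trace := by
    conv_lhs => rw [hsq]
    rw [mul_assoc, Matrix.trace_mul_comm]
  have hpsd : (CFC.sqrt A * B * CFC.sqrt A).PosSemidef := by
    have := hB.mul_mul_conjTranspose_same (CFC.sqrt A)
    rwa [(Matrix.nonneg_iff_posSemidef.mp (CFC.sqrt_nonneg A)).isHermitian.eq] at this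
  rw [h1]
  exact stmt10_trace_re_nonneg hpsd

lemma stmt10_gen_aux {Y X : Type*} [Fintype Y] [Fintype X] [DecidableEq Y] [DecidableEq X]
    (W : X → X → ℂ) (X' : Matrix (Y × X) (Y × X) ℂ)
    (h : ∀ x x' : X, ∑ y : Y, X' (y, x) (y, x') = if x = x' then 1 else 0) :
    ((Matrix.of fun p q : Y × X =>
        if p.1 = q.1 then W p.2 q.2 else 0) * X').trace = ∑ x : X, W x x := by
  simp only [Matrix.trace, Matrix.diag, Matrix.mul_apply, Matrix.of_apply,
    Fintype.sum_prod_type, ite_mul, zero_mul]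
  have step1 : ∀ (y : Y) (x : X),
      (∑ y' : Y, ∑ x' : X, if y = y' then W x x' * X' (y', x') (y, x) else 0)
        = ∑ x' : X, W x x' * X' (y, x') (y, x) := by
    intro y x
    simp
  simp only [step1]
  rw [Finset.sum_comm]
  have step2 : ∀ x : X, (∑ y : Y, ∑ x' : X, W x x' * X' (y, x') (y, x)) = W x x := by
    intro x
    rw [Finset.sum_comm]
    simp only [← Finset.mul_sum, h]
    simp
  simp only [step2]

/-- complementary slackness / optimality criterion for the hedging SDP.
If `C` is positive semidefinite, `X₀` is a primal-feasible Choi matrix (positive semidefinite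
with partial trace over `Y` equal to the identity), and the operator `1_Y ⊗ W` built from
`W(x,x') = Σ_y (C·X₀)((y,x),(y,x'))` satisfies `1_Y ⊗ W ≤ C`, then `X₀` is optimal for the
primal problem: every primal-feasible `X'` has `trace(C·X') ≥ trace(C·X₀)`. -/
theorem stmt10 {Y X : Type*} [Fintype Y] [Fintype X] [Nonempty Y] [Nonempty X]
    [DecidableEq Y] [DecidableEq X]
    (C : Matrix (Y × X) (Y × X) ℂ) (hC : C.PosSemidef)
    (X₀ : Matrix (Y × X) (Y × X) ℂ) (hX₀ : X₀.PosSemidef)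
    (hpt : ∀ x x' : X, ∑ y : Y, X₀ (y, x) (y, x') = if x = x' then 1 else 0)
    (hdual : (C - Matrix.of fun p q : Y × X =>
        if p.1 = q.1 then ∑ y : Y, (C * X₀) (y, p.2) (y, q.2) else 0).PosSemidef) :
    ∀ X' : Matrix (Y × X) (Y × X) ℂ, X'.PosSemidef →
      (∀ x x' : X, ∑ y : Y, X' (y, x) (y, x') = if x = x' then 1 else 0) →
      (Matrix.trace (C * X₀)).re ≤ (Matrix.trace (C * X')).re := by
  intro X' hX' hpt'
  set Wm : Matrix (Y × X) (Y × X) ℂ := Matrix.of fun p q : Y × X =>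
      if p.1 = q.1 then ∑ y : Y, (C * X₀) (y, p.2) (y, q.2) else 0 with hWm
  have key' : (Wm * X').trace = ∑ x : X, ∑ y : Y, (C * X₀) (y, x) (y, x) :=
    stmt10_gen_aux (fun x x' => ∑ y : Y, (C * X₀) (y, x) (y, x')) X' hpt'
  have htr : (C * X₀).trace = ∑ x : X, ∑ y : Y, (C * X₀) (y, x) (y, x) := by
    rw [Matrix.trace]
    simp only [Matrix.diag, Fintype.sum_prod_type]
    exact Finset.sum_comm
  have hD : 0 ≤ ((C - Wm) * X').trace.re := stmt10_trace_mul_re_nonneg hdual hX'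
  have hsplit : (C * X').trace = ((C - Wm) * X').trace + (Wm * X').trace := by
    rw [Matrix.sub_mul, Matrix.trace_sub]
    ring
  have : (C * X').trace.re = ((C - Wm) * X').trace.re + (C * X₀).trace.re := by
    rw [hsplit, Complex.add_re, key', htr]
  linarith
end

section
/- Let Q and E be positive semidefinite complex matrices of the same finite size with Q ≤ E and E ≠ 0. Then the supremum of the set of real numbers { Re(trace(Q·X)) / Re(trace(E·X)) : X positive semidefinite with trace(E·X) ≠ 0 } equals the infimum of the set { t : ℝ, t ≥ 0 and Q ≤ t·E }. This common value is the optimal probability for Bob to pass a single repetition of the verification protocol when he is allowed to return no answer (in which case the protocol restarts). -/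
open scoped BigOperators ComplexOrder

open Matrix

section Helpers
variable {d : Type*} [Fintype d] [DecidableEq d]


lemma diag_nonneg' {M : Matrix d d ℂ} (hM : M.PosSemidef) (i : d) :
    0 ≤ M i i := by
  exact hM.diag_nonneg

lemma trace_psd_nonneg {M : Matrix d d ℂ} (hM : M.PosSemidef) :
    0 ≤ Matrix.trace M :=
  Finset.sum_nonneg fun i _ => diag_nonneg' hM i

lemma trace_mul_psd_nonneg {A B : Matrix d d ℂ} (hA : A.PosSemidef) (hB : B.PosSemidef) :
    0 ≤ Matrix.trace (A * B) := by
  open MatrixOrder in obtain ⟨C, rfl⟩ := CStarAlgebra.nonneg_iff_eq_star_mul_self.mp hB.nonneg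
  rw [← mul_assoc, Matrix.trace_mul_cycle]
  exact trace_psd_nonneg (hA.mul_mul_conjTranspose_same C)

lemma trace_mul_vecMulVec (M : Matrix d d ℂ) (v : d → ℂ) :
    Matrix.trace (M * Matrix.vecMulVec v (star v)) = star v ⬝ᵥ (M *ᵥ v) := by
  simp only [Matrix.trace, Matrix.diag_apply, Matrix.mul_apply, Matrix.vecMulVec_apply,
    dotProduct, Matrix.mulVec, Pi.star_apply]
  congr 1; ext i
  rw [Finset.mul_sum]
  congr 1; ext j
  ring

lemma vecMulVec_psd (v : d → ℂ) : (Matrix.vecMulVec v (star v)).PosSemidef := by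
  exact Matrix.posSemidef_vecMulVec_self_star v

lemma herm_form_star {M : Matrix d d ℂ} (hM : M.IsHermitian) (v : d → ℂ) :
    star (star v ⬝ᵥ (M *ᵥ v)) = star v ⬝ᵥ (M *ᵥ v) := by
  conv_lhs => rw [star_dotProduct, star_star, star_mulVec, hM.eq]
  rw [← dotProduct_mulVec]

lemma herm_form_im {M : Matrix d d ℂ} (hM : M.IsHermitian) (v : d → ℂ) :
    (star v ⬝ᵥ (M *ᵥ v)).im = 0 := by
  have := herm_form_star hM v
  rwa [Complex.star_def, Complex.conj_eq_iff_im] at this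

lemma not_psd_exists {M : Matrix d d ℂ} (hM : M.IsHermitian) (h : ¬ M.PosSemidef) :
    ∃ v : d → ℂ, (star v ⬝ᵥ (M *ᵥ v)).re < 0 := by
  by_contra hc
  push_neg at hc
  refine h (Matrix.PosSemidef.of_dotProduct_mulVec_nonneg hM fun x => ?_)
  rw [Complex.le_def]
  exact ⟨by simpa using hc x, by simpa using (herm_form_im hM x).symm⟩

lemma psd_ne_zero_trace_pos {M : Matrix d d ℂ} (hM : M.PosSemidef) (h : M ≠ 0) :
    0 < (Matrix.trace M).re := by
  have h0 : 0 ≤ Matrix.trace M := trace_psd_nonneg hM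
  rw [Complex.le_def] at h0
  rcases lt_or_eq_of_le h0.1 with hlt | heq
  · simpa using hlt
  · exfalso
    have htr : Matrix.trace M = 0 :=
      Complex.ext (by simpa using heq.symm) (by simpa using h0.2.symm)
    have hdiag : ∀ i ∈ Finset.univ, M i i = 0 :=
      (Finset.sum_eq_zero_iff_of_nonneg (fun i _ => diag_nonneg' hM i)).mp htr
    apply h
    ext i j
    have hform : star (Pi.single j 1) ⬝ᵥ (M *ᵥ Pi.single j 1) = 0 := by
      simpa [dotProduct, Pi.single_apply, Finset.sum_ite_eq,
        Finset.sum_ite_eq'] using hdiag j (Finset.mem_univ j)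
    have h2 := (hM.dotProduct_mulVec_zero_iff (Pi.single j 1)).mp hform
    have h3 := congrFun h2 i
    simpa using h3

end Helpers

/-- Let `Q ≤ E` be positive semidefinite with `E ≠ 0`. The supremum of
`Re(tr(Q·X))/Re(tr(E·X))` over positive semidefinite `X` with `tr(E·X) ≠ 0` equals the
infimum of `{t ≥ 0 : Q ≤ t·E}`; this is the optimal probability for Bob to pass a single
repetition of the verification protocol when he may return no answer (restarting it). -/
theorem stmt11 {d : Type*} [Fintype d] [DecidableEq d] [Nonempty d]
    (Q E : Matrix d d ℂ) (hQ : Q.PosSemidef) (hE : E.PosSemidef)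
    (hQE : (E - Q).PosSemidef) (hEne : E ≠ 0) :
    sSup {v : ℝ | ∃ X : Matrix d d ℂ, X.PosSemidef ∧ Matrix.trace (E * X) ≠ 0 ∧
        v = (Matrix.trace (Q * X)).re / (Matrix.trace (E * X)).re}
      = sInf {t : ℝ | 0 ≤ t ∧ (t • E - Q).PosSemidef} := by
  classical
  set S := {v : ℝ | ∃ X : Matrix d d ℂ, X.PosSemidef ∧ Matrix.trace (E * X) ≠ 0 ∧
      v = (Matrix.trace (Q * X)).re / (Matrix.trace (E * X)).re} with hSdef
  set T := {t : ℝ | 0 ≤ t ∧ (t • E - Q).PosSemidef} with hTdef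
  have h1T : (1:ℝ) ∈ T := ⟨zero_le_one, by rw [one_smul]; exact hQE⟩
  have hTbdd : BddBelow T := ⟨0, fun t ht => ht.1⟩
  have hTne : T.Nonempty := ⟨1, h1T⟩
  have key : ∀ v ∈ S, ∀ t ∈ T, v ≤ t := by
    rintro v ⟨X, hX, hne, rfl⟩ t ⟨ht0, htp⟩
    have hE0 := Complex.le_def.mp (trace_mul_psd_nonneg hE hX)
    have hEre : 0 < (Matrix.trace (E * X)).re := by
      rcases lt_or_eq_of_le hE0.1 with h | h
      · simpa using h
      · exact absurd (Complex.ext (by simpa using h.symm) (by simpa using hE0.2.symm)) hne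
    have h2 := (Complex.le_def.mp (trace_mul_psd_nonneg htp hX)).1
    have h3 : (Matrix.trace ((t • E - Q) * X)).re
        = t * (Matrix.trace (E * X)).re - (Matrix.trace (Q * X)).re := by
      rw [Matrix.sub_mul, Matrix.trace_sub, Matrix.smul_mul, Matrix.trace_smul]
      simp [Complex.sub_re, Complex.real_smul, Complex.mul_re]
    rw [div_le_iff₀ hEre]
    simp only [Complex.zero_re] at h2
    rw [h3] at h2
    linarith
  have hEtr : Matrix.trace (E * 1) ≠ 0 := by
    rw [mul_one]
    intro h
    have := psd_ne_zero_trace_pos hE hEne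
    rw [h] at this
    simp at this
  have v0mem : ((Matrix.trace (Q * 1)).re / (Matrix.trace (E * 1)).re) ∈ S :=
    ⟨1, Matrix.PosSemidef.one, hEtr, rfl⟩
  have hSne : S.Nonempty := ⟨_, v0mem⟩
  have hSbdd : BddAbove S := ⟨1, fun v hv => key v hv 1 h1T⟩
  apply le_antisymm
  · exact csSup_le hSne fun v hv => le_csInf hTne fun t ht => key v hv t ht
  · by_contra hcon
    push_neg at hcon
    set s := sSup S with hs
    set r := sInf T with hr
    set t := (s + r) / 2 with htdef
    have hst : s < t := by rw [htdef]; linarith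
    have htr : t < r := by rw [htdef]; linarith
    have h0s : 0 ≤ s := by
      refine le_trans ?_ (le_csSup hSbdd v0mem)
      have hq : 0 ≤ (Matrix.trace (Q * 1)).re := by
        have := Complex.le_def.mp (trace_psd_nonneg hQ)
        rw [mul_one]
        simpa using this.1
      have he : 0 ≤ (Matrix.trace (E * 1)).re := by
        rw [mul_one]
        exact le_of_lt (psd_ne_zero_trace_pos hE hEne)
      exact div_nonneg hq he
    have ht0 : 0 ≤ t := by linarith
    have htT : t ∉ T := fun h => absurd (csInf_le hTbdd h) (not_le.mpr htr)
    have hherm : (t • E - Q).IsHermitian := by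
      show (t • E - Q)ᴴ = t • E - Q
      rw [Matrix.conjTranspose_sub, Matrix.conjTranspose_smul, star_trivial,
        hE.1.eq, hQ.1.eq]
    have hnp : ¬ (t • E - Q).PosSemidef := fun h => htT ⟨ht0, h⟩
    obtain ⟨v, hv⟩ := not_psd_exists hherm hnp
    have hform : (star v ⬝ᵥ ((t • E - Q) *ᵥ v)).re
        = t * (star v ⬝ᵥ (E *ᵥ v)).re - (star v ⬝ᵥ (Q *ᵥ v)).re := by
      rw [Matrix.sub_mulVec, dotProduct_sub, Matrix.smul_mulVec, dotProduct_smul]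
      simp [Complex.sub_re, Complex.real_smul, Complex.mul_re]
    rw [hform] at hv
    have hqre : 0 ≤ (star v ⬝ᵥ (Q *ᵥ v)).re := by
      simpa using hQ.re_dotProduct_nonneg v
    have here : 0 ≤ (star v ⬝ᵥ (E *ᵥ v)).re := by
      simpa using hE.re_dotProduct_nonneg v
    have hqle : (star v ⬝ᵥ (Q *ᵥ v)).re ≤ (star v ⬝ᵥ (E *ᵥ v)).re := by
      have := hQE.re_dotProduct_nonneg v
      have h2 : 0 ≤ (star v ⬝ᵥ ((E - Q) *ᵥ v)).re := by simpa using this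
      rw [Matrix.sub_mulVec, dotProduct_sub, Complex.sub_re] at h2
      linarith
    have hepos : 0 < (star v ⬝ᵥ (E *ᵥ v)).re := by
      rcases lt_or_eq_of_le here with h | h
      · exact h
      · exfalso
        have he0 : (star v ⬝ᵥ (E *ᵥ v)).re = 0 := h.symm
        rw [he0] at hv hqle
        nlinarith
    have hXtr : Matrix.trace (E * Matrix.vecMulVec v (star v)) ≠ 0 := by
      rw [trace_mul_vecMulVec]
      intro h
      rw [h] at hepos
      simp at hepos
    have hwmem : ((star v ⬝ᵥ (Q *ᵥ v)).re / (star v ⬝ᵥ (E *ᵥ v)).re) ∈ S := by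
      refine ⟨Matrix.vecMulVec v (star v), vecMulVec_psd v, hXtr, ?_⟩
      rw [trace_mul_vecMulVec, trace_mul_vecMulVec]
    have hwle : ((star v ⬝ᵥ (Q *ᵥ v)).re / (star v ⬝ᵥ (E *ᵥ v)).re) ≤ s :=
      le_csSup hSbdd hwmem
    have hwgt : t < (star v ⬝ᵥ (Q *ᵥ v)).re / (star v ⬝ᵥ (E *ᵥ v)).re := by
      rw [lt_div_iff₀ hepos]
      linarith
    linarith
end

section
/- Let A and B be complex Hermitian matrices of the same finite size with 0 ≤ A ≤ B and B·B = B (B an orthogonal projection). Then the spectral norm satisfies ‖A ⊗ₖ B + B ⊗ₖ A − A ⊗ₖ A‖ = 2·‖A‖ − ‖A‖². Equivalently, the optimal probability of winning at least one of two parallel repetitions in the verification model with abstention equals 1 − (1 − ‖A‖)², so Bob gains nothing over playing the two repetitions independently and no quantum hedging is possible. -/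
set_option synthInstance.maxHeartbeats 400000
set_option maxHeartbeats 1000000
set_option linter.unusedSectionVars false

open scoped ComplexOrder Kronecker

/-- The ℓ²→ℓ² operator norm (spectral norm, largest singular value) of a square complex
matrix, via the associated continuous linear map on Euclidean space. -/
noncomputable def specNorm {m : Type*} [Fintype m] [DecidableEq m] (M : Matrix m m ℂ) : ℝ :=
  ‖Matrix.toEuclideanCLM (𝕜 := ℂ) M‖

namespace Stmt13Aux

open Matrix ContinuousLinearMap

variable {m : Type*} [Fintype m] [DecidableEq m]

lemma nonneg_of_psd {M : Matrix m m ℂ} (h : M.PosSemidef) :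
    0 ≤ Matrix.toEuclideanCLM (𝕜 := ℂ) M := by
  exact (ContinuousLinearMap.nonneg_iff_isPositive _).mpr (Matrix.isPositive_toEuclideanLin_iff.mpr h)

lemma psd_of_nonneg {M : Matrix m m ℂ} (h : 0 ≤ Matrix.toEuclideanCLM (𝕜 := ℂ) M) :
    M.PosSemidef := by
  set T := Matrix.toEuclideanCLM (𝕜 := ℂ) M with hT
  have hP : T.IsPositive := (ContinuousLinearMap.nonneg_iff_isPositive T).mp h
  have hherm : M.IsHermitian := by
    have h1 : star T = T := hP.isSelfAdjoint
    rw [hT, ← map_star] at h1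
    have := (Matrix.toEuclideanCLM (𝕜 := ℂ)).injective h1
    rwa [Matrix.star_eq_conjTranspose] at this
  refine Matrix.PosSemidef.of_dotProduct_mulVec_nonneg hherm fun x => ?_
  set v : EuclideanSpace ℂ m := (WithLp.equiv 2 _).symm x with hv
  have hTv : T v = (WithLp.equiv 2 _).symm (M *ᵥ x) := by
    rw [hT, hv, WithLp.equiv_symm_apply, Matrix.toEuclideanCLM_toLp]
  have hinner : (inner ℂ v (T v) : ℂ) = dotProduct (star x) (M *ᵥ x) := by
    rw [hTv, hv, WithLp.equiv_symm_apply, EuclideanSpace.inner_toLp_toLp,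
      dotProduct_comm]
  have him : (starRingEnd ℂ) (inner ℂ v (T v) : ℂ) = (inner ℂ v (T v) : ℂ) := by
    have hsym := (ContinuousLinearMap.isSelfAdjoint_iff_isSymmetric.mp hP.isSelfAdjoint) v v
    calc (starRingEnd ℂ) (inner ℂ v (T v) : ℂ) = (inner ℂ (T v) v : ℂ) := by rw [inner_conj_symm]
    _ = (inner ℂ v (T v) : ℂ) := hsym
  have hre : 0 ≤ RCLike.re (inner ℂ v (T v) : ℂ) := hP.re_inner_nonneg_right v
  rw [← hinner, Complex.le_def]
  have him' : (inner ℂ v (T v) : ℂ).im = 0 := Complex.conj_eq_iff_im.mp him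
  constructor
  · simpa using hre
  · simpa using him'.symm

lemma psd_iff (M : Matrix m m ℂ) :
    M.PosSemidef ↔ 0 ≤ Matrix.toEuclideanCLM (𝕜 := ℂ) M :=
  ⟨nonneg_of_psd, psd_of_nonneg⟩
lemma algebraMap_sub (r : ℝ) (M : Matrix m m ℂ) :
    algebraMap ℝ (EuclideanSpace ℂ m →L[ℂ] EuclideanSpace ℂ m) r
      - Matrix.toEuclideanCLM (𝕜 := ℂ) M
      = Matrix.toEuclideanCLM (𝕜 := ℂ) ((r : ℂ) • (1 : Matrix m m ℂ) - M) := by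
  rw [map_sub, _root_.map_smul, _root_.map_one]
  congr 1
  try rw [Algebra.algebraMap_eq_smul_one, RCLike.real_smul_eq_coe_smul (K := ℂ)]

lemma specNorm_le_of_psd_le {M : Matrix m m ℂ} {r : ℝ} (hr : 0 ≤ r) (h0 : M.PosSemidef)
    (h : ((r : ℂ) • (1 : Matrix m m ℂ) - M).PosSemidef) : specNorm M ≤ r := by
  have hle : Matrix.toEuclideanCLM (𝕜 := ℂ) M
      ≤ algebraMap ℝ (EuclideanSpace ℂ m →L[ℂ] EuclideanSpace ℂ m) r := by
    rw [ContinuousLinearMap.le_def, ← ContinuousLinearMap.nonneg_iff_isPositive,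
      algebraMap_sub]
    exact nonneg_of_psd h
  exact (CStarAlgebra.norm_le_iff_le_algebraMap _ hr (nonneg_of_psd h0)).mpr hle

lemma specNorm_ge {M : Matrix m m ℂ} {r : ℝ} {v : m → ℂ} (hr : 0 ≤ r) (hv : v ≠ 0)
    (h : M *ᵥ v = (r : ℂ) • v) : r ≤ specNorm M := by
  set u : EuclideanSpace ℂ m := (WithLp.equiv 2 _).symm v with hu
  have hu0 : u ≠ 0 := by
    simpa [hu] using hv
  have h1 : Matrix.toEuclideanCLM (𝕜 := ℂ) M u = (r : ℂ) • u := by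
    rw [hu, WithLp.equiv_symm_apply, Matrix.toEuclideanCLM_toLp, h, WithLp.toLp_smul]
  have h2 := (Matrix.toEuclideanCLM (𝕜 := ℂ) M).le_opNorm u
  rw [h1, norm_smul] at h2
  have h3 : ‖(r : ℂ)‖ = r := by
    rw [Complex.norm_real, Real.norm_eq_abs, abs_of_nonneg hr]
  rw [h3] at h2
  have hupos : 0 < ‖u‖ := norm_pos_iff.mpr hu0
  exact le_of_mul_le_mul_right h2 hupos

lemma exists_top_eigenvector [Nonempty m] {M : Matrix m m ℂ} (hM : M.PosSemidef) :
    ∃ v : m → ℂ, v ≠ 0 ∧ M *ᵥ v = (specNorm M : ℂ) • v := by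
  obtain ⟨i₀, -, hi₀⟩ := Finset.exists_max_image Finset.univ hM.1.eigenvalues
    Finset.univ_nonempty
  set μ := hM.1.eigenvalues i₀ with hμ
  have hμ0 : 0 ≤ μ := hM.eigenvalues_nonneg i₀
  set v : m → ℂ := ⇑(hM.1.eigenvectorBasis i₀) with hvdef
  have hv0 : v ≠ 0 := by
    intro hcon
    have hb : (hM.1.eigenvectorBasis i₀ : EuclideanSpace ℂ m) = 0 := by
      apply PiLp.ext; intro i
      exact congrFun hcon i
    have := hM.1.eigenvectorBasis.orthonormal.1 i₀
    rw [hb] at this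
    simp at this
  have heig : M *ᵥ v = (μ : ℂ) • v := by
    have := hM.1.mulVec_eigenvectorBasis i₀
    rwa [RCLike.real_smul_eq_coe_smul (K := ℂ)] at this
  -- upper bound : specNorm M ≤ μ
  have hup : specNorm M ≤ μ := by
    apply specNorm_le_of_psd_le hμ0 hM
    set U : Matrix m m ℂ := (hM.1.eigenvectorUnitary : Matrix m m ℂ) with hU
    have hUU : U * star U = 1 := (Matrix.mem_unitaryGroup_iff).mp hM.1.eigenvectorUnitary.2
    have hdiag : ((μ : ℂ) • (1 : Matrix m m ℂ)
        - Matrix.diagonal (RCLike.ofReal ∘ hM.1.eigenvalues))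
        = Matrix.diagonal (fun i => ((μ - hM.1.eigenvalues i : ℝ) : ℂ)) := by
      ext i j
      by_cases hij : i = j
      · subst hij; simp [Matrix.one_apply, Matrix.diagonal_apply]
      · simp [Matrix.one_apply_ne hij, Matrix.diagonal_apply_ne _ hij]
    have hdpsd : (Matrix.diagonal (fun i => ((μ - hM.1.eigenvalues i : ℝ) : ℂ))).PosSemidef := by
      apply Matrix.PosSemidef.diagonal
      intro i
      exact Complex.zero_le_real.mpr (sub_nonneg.mpr (hi₀ i (Finset.mem_univ i)))
    have key : (μ : ℂ) • (1 : Matrix m m ℂ) - M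
        = U * ((μ : ℂ) • (1 : Matrix m m ℂ)
            - Matrix.diagonal (RCLike.ofReal ∘ hM.1.eigenvalues)) * star U := by
      rw [Matrix.mul_sub, Matrix.sub_mul]
      congr 1
      · rw [Matrix.mul_smul, mul_one, Matrix.smul_mul, hUU]
      · exact hM.1.spectral_theorem
    rw [key, hdiag]
    rw [Matrix.star_eq_conjTranspose]
    exact hdpsd.mul_mul_conjTranspose_same U
  have hlow : μ ≤ specNorm M := specNorm_ge hμ0 hv0 heig
  exact ⟨v, hv0, by rw [le_antisymm hup hlow]; exact heig⟩

variable {n : Type*} [Fintype n] [DecidableEq n]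

lemma kron_conjTranspose (P : Matrix m m ℂ) (Q : Matrix n n ℂ) :
    (P ⊗ₖ Q)ᴴ = Pᴴ ⊗ₖ Qᴴ := by
  ext ⟨i, k⟩ ⟨j, l⟩
  simp [Matrix.conjTranspose_apply, Matrix.kroneckerMap_apply, star_mul']

lemma kron_psd {P : Matrix m m ℂ} {Q : Matrix n n ℂ} (hP : P.PosSemidef) (hQ : Q.PosSemidef) :
    (P ⊗ₖ Q).PosSemidef := by
  exact hP.kronecker hQ

lemma psd_smul {M : Matrix m m ℂ} (hM : M.PosSemidef) {r : ℝ} (hr : 0 ≤ r) :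
    ((r : ℂ) • M).PosSemidef := by
  refine Matrix.PosSemidef.of_dotProduct_mulVec_nonneg ?_ ?_
  · have h1 := hM.1
    rw [Matrix.IsHermitian, Matrix.conjTranspose_smul, h1.eq]
    congr 1
    simp [Complex.star_def, Complex.conj_ofReal]
  · intro x
    rw [Matrix.smul_mulVec, dotProduct_smul, smul_eq_mul]
    exact mul_nonneg (Complex.zero_le_real.mpr hr) (hM.dotProduct_mulVec_nonneg x)

lemma proj_compl_psd {P : Matrix m m ℂ} (hP : P.IsHermitian) (hP2 : P * P = P) :
    ((1 : Matrix m m ℂ) - P).PosSemidef := by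
  have h : ((1 : Matrix m m ℂ) - P)ᴴ * (1 - P) = 1 - P := by
    rw [Matrix.conjTranspose_sub, Matrix.conjTranspose_one, hP.eq]
    simp only [Matrix.mul_sub, Matrix.sub_mul, one_mul, mul_one, hP2]
    abel
  rw [← h]
  exact Matrix.posSemidef_conjTranspose_mul_self _

lemma kron_mulVec (P : Matrix m m ℂ) (Q : Matrix n n ℂ) (x : m → ℂ) (y : n → ℂ) :
    (P ⊗ₖ Q) *ᵥ (fun p => x p.1 * y p.2) = fun p => (P *ᵥ x) p.1 * (Q *ᵥ y) p.2 := by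
  funext p
  obtain ⟨i, k⟩ := p
  simp only [Matrix.mulVec, dotProduct, Matrix.kroneckerMap_apply]
  rw [Fintype.sum_prod_type, Finset.sum_mul_sum]
  exact Finset.sum_congr rfl fun j _ => Finset.sum_congr rfl fun l _ => by ring

lemma psd_add_eq_zero {P Q : Matrix m m ℂ} (hP : P.PosSemidef) (hQ : Q.PosSemidef)
    (h : P + Q = 0) : P = 0 := by
  have hQP : Q = -P := eq_neg_of_add_eq_zero_right h
  have hle : Matrix.toEuclideanCLM (𝕜 := ℂ) P ≤ 0 := by
    rw [ContinuousLinearMap.le_def, ← ContinuousLinearMap.nonneg_iff_isPositive, zero_sub,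
      ← map_neg, ← hQP]
    exact nonneg_of_psd hQ
  have h0 : Matrix.toEuclideanCLM (𝕜 := ℂ) P = 0 := le_antisymm hle (nonneg_of_psd hP)
  calc P = (Matrix.toEuclideanCLM (𝕜 := ℂ)).symm (Matrix.toEuclideanCLM (𝕜 := ℂ) P) :=
        (StarAlgEquiv.symm_apply_apply _ _).symm
  _ = 0 := by rw [h0, map_zero]

open scoped MatrixOrder in
lemma mul_eq_self {A B : Matrix m m ℂ} (hA : A.PosSemidef) (hBH : B.IsHermitian)
    (hBA : (B - A).PosSemidef) (hB : B * B = B) : A * B = A := by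
  set X := (1 : Matrix m m ℂ) - B with hX
  have hXH : Xᴴ = X := by
    rw [hX, Matrix.conjTranspose_sub, Matrix.conjTranspose_one, hBH.eq]
  have hXBX : X * B * X = 0 := by
    have h1 : X * B = 0 := by rw [hX, Matrix.sub_mul, one_mul, hB, sub_self]
    rw [h1, Matrix.zero_mul]
  have hP : (X * A * X).PosSemidef := by
    have := hA.mul_mul_conjTranspose_same X; rwa [hXH] at this
  have hQ : (X * (B - A) * X).PosSemidef := by
    have := hBA.mul_mul_conjTranspose_same X; rwa [hXH] at this
  have hsum : X * A * X + X * (B - A) * X = 0 := by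
    have h2 : X * A * X + X * (B - A) * X = X * B * X := by
      noncomm_ring
    rw [h2, hXBX]
  have hPA0 : X * A * X = 0 := psd_add_eq_zero hP hQ hsum
  set S := CFC.sqrt A with hS
  have hSS : S * S = A := CFC.sqrt_mul_sqrt_self A hA.nonneg
  have hSH : Sᴴ = S := (CFC.sqrt_nonneg A).posSemidef.1
  have h1 : (S * X)ᴴ * (S * X) = 0 := by
    calc (S * X)ᴴ * (S * X) = X * (S * S) * X := by
          rw [Matrix.conjTranspose_mul, hSH, hXH]; noncomm_ring
    _ = X * A * X := by rw [hSS]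
    _ = 0 := hPA0
  have hSX : S * X = 0 := Matrix.conjTranspose_mul_self_eq_zero.mp h1
  have hAX : A * X = 0 := by rw [← hSS, Matrix.mul_assoc, hSX, Matrix.mul_zero]
  have h3 : A * (1 - B) = 0 := hAX
  rw [Matrix.mul_sub, Matrix.mul_one] at h3
  exact (sub_eq_zero.mp h3).symm

lemma key_M_decomp (A B : Matrix m m ℂ) :
    A ⊗ₖ B + B ⊗ₖ A - A ⊗ₖ A = B ⊗ₖ A + A ⊗ₖ (B - A) := by
  ext ⟨i, k⟩ ⟨j, l⟩
  simp only [Matrix.add_apply, Matrix.sub_apply, Matrix.kroneckerMap_apply]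
  ring

lemma key_identity (α : ℂ) (A B : Matrix m m ℂ) :
    (2 * α - α ^ 2) • (1 : Matrix (m × m) (m × m) ℂ) - (A ⊗ₖ B + B ⊗ₖ A - A ⊗ₖ A)
      = (2 * α - α ^ 2) • ((1 : Matrix (m × m) (m × m) ℂ) - B ⊗ₖ B)
        + (α • B - A) ⊗ₖ (B - A) + (1 - α) • (B ⊗ₖ (α • B - A)) := by
  ext ⟨i, k⟩ ⟨j, l⟩
  simp only [Matrix.add_apply, Matrix.sub_apply, Matrix.smul_apply, Matrix.kroneckerMap_apply,
    Matrix.one_apply, smul_eq_mul]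
  split_ifs <;> ring

end Stmt13Aux

open Stmt13Aux Matrix in
/-- If `A`, `B` are Hermitian with `0 ≤ A ≤ B` and `B` an orthogonal projection,
then `‖A ⊗ₖ B + B ⊗ₖ A − A ⊗ₖ A‖ = 2‖A‖ − ‖A‖²` in spectral norm: the optimal probability of
winning at least one of two parallel repetitions in the verification model with abstention is
`1 − (1 − ‖A‖)²`, so no quantum hedging is possible. -/
theorem stmt13 {d : Type*} [Fintype d] [DecidableEq d] (A B : Matrix d d ℂ)
    (hA : A.PosSemidef) (hBH : B.IsHermitian) (hBA : (B - A).PosSemidef)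
    (hB : B * B = B) :
    specNorm (A ⊗ₖ B + B ⊗ₖ A - A ⊗ₖ A) = 2 * specNorm A - specNorm A ^ 2 := by
  by_cases hd : Nonempty d
  · set a := specNorm A with ha
    have ha0 : 0 ≤ a := norm_nonneg _
    -- B is psd
    have hBpsd : B.PosSemidef := by
      have h1 : B = Bᴴ * B := by rw [hBH.eq, hB]
      rw [h1]; exact Matrix.posSemidef_conjTranspose_mul_self B
    -- a ≤ 1
    have hφB_sa : IsSelfAdjoint (Matrix.toEuclideanCLM (𝕜 := ℂ) B) := by
      rw [isSelfAdjoint_iff, ← map_star, Matrix.star_eq_conjTranspose, hBH.eq]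
    have hnB : ‖Matrix.toEuclideanCLM (𝕜 := ℂ) B‖ ≤ 1 := by
      have h2 := CStarRing.norm_star_mul_self (x := Matrix.toEuclideanCLM (𝕜 := ℂ) B)
      rw [hφB_sa.star_eq, ← _root_.map_mul, hB] at h2
      nlinarith [norm_nonneg (Matrix.toEuclideanCLM (𝕜 := ℂ) B)]
    have ha1 : a ≤ 1 := by
      have hle : Matrix.toEuclideanCLM (𝕜 := ℂ) A ≤ Matrix.toEuclideanCLM (𝕜 := ℂ) B := by
        rw [ContinuousLinearMap.le_def, ← ContinuousLinearMap.nonneg_iff_isPositive, ← map_sub]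
        exact nonneg_of_psd hBA
      have := CStarAlgebra.norm_le_norm_of_nonneg_of_le (nonneg_of_psd hA) hle
      exact le_trans this hnB
    set t : ℝ := 2 * a - a ^ 2 with htdef
    have ht0 : 0 ≤ t := by nlinarith
    have hcast : ((t : ℝ) : ℂ) = 2 * (a : ℂ) - (a : ℂ) ^ 2 := by
      rw [htdef, Complex.ofReal_sub, Complex.ofReal_mul, Complex.ofReal_pow]
      norm_num
    -- products
    have hAB' : A * B = A := mul_eq_self hA hBH hBA hB
    have hBA' : B * A = A := by
      have := congrArg Matrix.conjTranspose hAB'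
      rwa [Matrix.conjTranspose_mul, hA.1.eq, hBH.eq] at this
    -- a • 1 - A is psd
    have haI : ((a : ℂ) • (1 : Matrix d d ℂ) - A).PosSemidef := by
      apply psd_of_nonneg
      have hsa : IsSelfAdjoint (Matrix.toEuclideanCLM (𝕜 := ℂ) A) := by
        rw [isSelfAdjoint_iff, ← map_star, Matrix.star_eq_conjTranspose, hA.1.eq]
      have hle := hsa.le_algebraMap_norm_self
      have h4 := (ContinuousLinearMap.le_def _ _).mp hle
      rw [algebraMap_sub] at h4
      exact (ContinuousLinearMap.nonneg_iff_isPositive _).mpr h4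
    -- a • B - A is psd
    have hD : ((a : ℂ) • B - A).PosSemidef := by
      have h1 := haI.mul_mul_conjTranspose_same B
      rw [hBH.eq] at h1
      have h2 : B * ((a : ℂ) • (1 : Matrix d d ℂ) - A) * B = (a : ℂ) • B - A := by
        rw [Matrix.mul_sub, Matrix.mul_smul, Matrix.mul_one, Matrix.sub_mul, Matrix.smul_mul,
          hB, Matrix.mul_assoc, hAB', hBA']
      rwa [h2] at h1
    -- M is psd
    have hM : (A ⊗ₖ B + B ⊗ₖ A - A ⊗ₖ A).PosSemidef := by
      rw [key_M_decomp]
      exact (kron_psd hBpsd hA).add (kron_psd hA hBA)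
    -- upper bound
    have hup : specNorm (A ⊗ₖ B + B ⊗ₖ A - A ⊗ₖ A) ≤ t := by
      apply specNorm_le_of_psd_le ht0 hM
      rw [hcast, key_identity]
      have p1 : ((2 * (a:ℂ) - (a:ℂ) ^ 2) •
          ((1 : Matrix (d × d) (d × d) ℂ) - B ⊗ₖ B)).PosSemidef := by
        rw [← hcast]
        refine psd_smul ?_ ht0
        apply proj_compl_psd
        · rw [Matrix.IsHermitian, kron_conjTranspose, hBH.eq]
        · rw [← Matrix.mul_kronecker_mul, hB]
      have p2 : (((a:ℂ) • B - A) ⊗ₖ (B - A)).PosSemidef := kron_psd hD hBA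
      have p3 : ((1 - (a:ℂ)) • (B ⊗ₖ ((a:ℂ) • B - A))).PosSemidef := by
        have hc : (1 - (a:ℂ)) = ((1 - a : ℝ) : ℂ) := by push_cast; ring
        rw [hc]
        exact psd_smul (kron_psd hBpsd hD) (by linarith)
      exact (p1.add p2).add p3
    -- lower bound
    have hlo : t ≤ specNorm (A ⊗ₖ B + B ⊗ₖ A - A ⊗ₖ A) := by
      rcases eq_or_lt_of_le ha0 with h0 | hpos
      · -- a = 0 : then A = 0 and both sides are trivial
        have hA0 : A = 0 := by
          have h5 : Matrix.toEuclideanCLM (𝕜 := ℂ) A = 0 := by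
            rw [← norm_eq_zero]; exact (ha ▸ h0).symm
          calc A = (Matrix.toEuclideanCLM (𝕜 := ℂ)).symm (Matrix.toEuclideanCLM (𝕜 := ℂ) A) :=
                (StarAlgEquiv.symm_apply_apply _ _).symm
          _ = 0 := by rw [h5, map_zero]
        have : t = 0 := by rw [htdef, ← h0]; ring
        rw [this]
        exact norm_nonneg _
      · obtain ⟨v, hv0, hv2⟩ := exists_top_eigenvector hA
        have hBv : B *ᵥ v = v := by
          have h3 : B *ᵥ (A *ᵥ v) = A *ᵥ v := by rw [Matrix.mulVec_mulVec, hBA']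
          rw [hv2, Matrix.mulVec_smul] at h3
          have hane : (a : ℂ) ≠ 0 := by
            simpa using ne_of_gt hpos
          exact smul_right_injective (d → ℂ) hane h3
        set w : d × d → ℂ := fun p => v p.1 * v p.2 with hw
        have hw0 : w ≠ 0 := by
          obtain ⟨i, hi⟩ := Function.ne_iff.mp hv0
          intro hcon
          have : w (i, i) = 0 := by rw [hcon]; rfl
          rw [hw] at this
          exact (mul_ne_zero (by simpa using hi) (by simpa using hi)) this
        have hMw : (A ⊗ₖ B + B ⊗ₖ A - A ⊗ₖ A) *ᵥ w = ((t : ℝ) : ℂ) • w := by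
          have e1 : (A ⊗ₖ B) *ᵥ w = fun p => ((a:ℂ) • v) p.1 * v p.2 := by
            rw [hw, kron_mulVec, hv2, hBv]
          have e2 : (B ⊗ₖ A) *ᵥ w = fun p => v p.1 * ((a:ℂ) • v) p.2 := by
            rw [hw, kron_mulVec, hv2, hBv]
          have e3 : (A ⊗ₖ A) *ᵥ w = fun p => ((a:ℂ) • v) p.1 * ((a:ℂ) • v) p.2 := by
            rw [hw, kron_mulVec, hv2]
          rw [Matrix.sub_mulVec, Matrix.add_mulVec, e1, e2, e3]
          funext p
          simp only [Pi.add_apply, Pi.sub_apply, Pi.smul_apply, smul_eq_mul, hw, hcast]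
          ring
        exact specNorm_ge ht0 hw0 hMw
    exact le_antisymm hup hlo
  · -- d is empty
    have hempty : IsEmpty d := not_nonempty_iff.mp hd
    have hA0 : A = 0 := by ext i; exact hempty.elim i
    have hM0 : A ⊗ₖ B + B ⊗ₖ A - A ⊗ₖ A = 0 := by
      ext ⟨i, k⟩; exact hempty.elim i
    rw [hM0, hA0]
    simp [specNorm]
end

section
/- Let d be a finite nonempty type, n ≥ 1 an integer, and let A, B be complex Hermitian matrices indexed by d with 0 ≤ A ≤ B and B·B = B (B an orthogonal projection). Let P be the matrix indexed by (Fin n → d) with entries P(r, c) = ∏ᵢ B(r i, c i) (the n-fold Kronecker power B^{⊗n}), and let R be the matrix with entries R(r, c) = ∏ᵢ (B − A)(r i, c i) (the n-fold Kronecker power (B − A)^{⊗n}). Then the spectral norm satisfies ‖P − R‖ = 1 − (1 − ‖A‖)^n. Equivalently, the optimal probability of winning at least one of n parallel repetitions in the verification model with abstention equals 1 − (1 − ‖A‖)^n, the value achieved by playing each repetition independently. -/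
open scoped BigOperators ComplexOrder

/-- The `n`-fold Kronecker power of a square matrix `M`, as a matrix indexed by `Fin n → d`,
with entries `(r, c) ↦ ∏ᵢ M (r i) (c i)`. -/
def kronPow {d : Type*} [Fintype d] (n : ℕ) (M : Matrix d d ℂ) :
    Matrix (Fin n → d) (Fin n → d) ℂ :=
  Matrix.of fun r c => ∏ i, M (r i) (c i)

open scoped Matrix

set_option linter.unusedSectionVars false

lemma posSemidef_iff_nonneg {m : Type*} [Fintype m] [DecidableEq m] (M : Matrix m m ℂ) :
    M.PosSemidef ↔ 0 ≤ Matrix.toEuclideanCLM (𝕜 := ℂ) M := by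
  rw [ContinuousLinearMap.nonneg_iff_isPositive]
  have key : ∀ x : EuclideanSpace ℂ m,
      (inner ℂ (Matrix.toEuclideanCLM (𝕜 := ℂ) M x) x : ℂ)
        = star (star (WithLp.equiv 2 (m → ℂ) x) ⬝ᵥ (M *ᵥ (WithLp.equiv 2 (m → ℂ) x))) := by
    intro x
    rw [EuclideanSpace.inner_eq_star_dotProduct]
    simp only [Matrix.ofLp_toEuclideanCLM, Matrix.toLin'_apply]
    simp [dotProduct, star_sum, mul_comm]
  constructor
  · intro hM
    rw [ContinuousLinearMap.isPositive_iff_complex]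
    intro x
    set z := star (WithLp.equiv 2 (m → ℂ) x) ⬝ᵥ (M *ᵥ (WithLp.equiv 2 (m → ℂ) x)) with hzdef
    have hz := hM.dotProduct_mulVec_nonneg (WithLp.equiv 2 (m → ℂ) x)
    rw [RCLike.nonneg_iff] at hz
    obtain ⟨hre, him⟩ := hz
    have hz' : star z = z := Complex.conj_eq_iff_im.mpr (by simpa [hzdef] using him)
    rw [key x, hz']
    refine ⟨Complex.ext (by simp) ?_, hre⟩
    simp only [Complex.ofReal_im]
    exact (show z.im = 0 by simpa [hzdef] using him).symm
  · intro h
    have hpos : (Matrix.toEuclideanCLM (𝕜 := ℂ) M).IsPositive := h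
    refine Matrix.PosSemidef.of_dotProduct_mulVec_nonneg ?_ ?_
    · have hsa : IsSelfAdjoint (Matrix.toEuclideanCLM (𝕜 := ℂ) M) := hpos.isSelfAdjoint
      have : Matrix.toEuclideanCLM (𝕜 := ℂ) Mᴴ = Matrix.toEuclideanCLM (𝕜 := ℂ) M := by
        rw [← Matrix.star_eq_conjTranspose, map_star]; exact hsa
      exact Matrix.toEuclideanCLM.injective this
    · intro y
      obtain ⟨h1, h2⟩ := (ContinuousLinearMap.isPositive_iff_complex _).mp hpos
        ((WithLp.equiv 2 (m → ℂ)).symm y)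
      rw [key _] at h1 h2
      simp only [Equiv.apply_symm_apply] at h1 h2
      set z := star y ⬝ᵥ (M *ᵥ y) with hzdef
      have h3 : z.im = 0 := by
        have := congrArg Complex.im h1
        simp only [Complex.ofReal_im] at this
        simpa using this.symm
      have h4 : 0 ≤ z.re := by simpa using h2
      rw [RCLike.nonneg_iff]
      exact ⟨by simpa using h4, by simpa using h3⟩

section Lemmas
variable {m : Type*} [Fintype m] [DecidableEq m]

lemma psd_eq_zero {X : Matrix m m ℂ} (h1 : X.PosSemidef) (h2 : (-X).PosSemidef) : X = 0 := by
  have a1 := (posSemidef_iff_nonneg X).mp h1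
  have a2 := (posSemidef_iff_nonneg (-X)).mp h2
  rw [map_neg] at a2
  have : Matrix.toEuclideanCLM (𝕜 := ℂ) X = 0 := le_antisymm (by simpa using neg_nonneg.mp a2) a1
  have := Matrix.toEuclideanCLM.injective (by simpa using this : Matrix.toEuclideanCLM (𝕜 := ℂ) X = Matrix.toEuclideanCLM (𝕜 := ℂ) 0)
  exact this

lemma psd_smul {M : Matrix m m ℂ} (hM : M.PosSemidef) {c : ℝ} (hc : 0 ≤ c) :
    ((c : ℂ) • M).PosSemidef := by
  refine Matrix.PosSemidef.of_dotProduct_mulVec_nonneg ?_ ?_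
  · have := hM.1
    simp only [Matrix.IsHermitian, Matrix.conjTranspose_smul] at *
    rw [this]
    congr 1
    simp
  · intro x
    rw [Matrix.smul_mulVec, dotProduct_smul, smul_eq_mul]
    exact mul_nonneg (by exact_mod_cast hc) (hM.dotProduct_mulVec_nonneg x)

lemma proj_psd {X : Matrix m m ℂ} (hX : X.IsHermitian) (h : X * X = X) : X.PosSemidef := by
  have h2 := Matrix.posSemidef_conjTranspose_mul_self (R := ℂ) X
  rwa [hX.eq, h] at h2

lemma one_sub_proj {X : Matrix m m ℂ} (hX : X.IsHermitian) (h : X * X = X) :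
    (1 - X).PosSemidef := by
  apply proj_psd (Matrix.isHermitian_one.sub hX)
  have e : (1 - X) * (1 - X) = 1 - X - (X - X * X) := by noncomm_ring
  rw [e, h]
  abel

lemma algebraMap_clm_eq (t : ℝ) :
    algebraMap ℝ (EuclideanSpace ℂ m →L[ℂ] EuclideanSpace ℂ m) t
      = Matrix.toEuclideanCLM (𝕜 := ℂ) ((t : ℂ) • 1) := by
  rw [Algebra.algebraMap_eq_smul_one, RCLike.real_smul_eq_coe_smul (K := ℂ), map_smul, map_one]
  rfl

set_option synthInstance.maxHeartbeats 1000000 in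
lemma sub_smul_one_psd {M : Matrix m m ℂ} (hM : M.PosSemidef) :
    (((specNorm M : ℝ) : ℂ) • 1 - M).PosSemidef := by
  have h0 : 0 ≤ Matrix.toEuclideanCLM (𝕜 := ℂ) M := (posSemidef_iff_nonneg M).mp hM
  have hsa : IsSelfAdjoint (Matrix.toEuclideanCLM (𝕜 := ℂ) M) := .of_nonneg h0
  have hle := hsa.le_algebraMap_norm_self
  rw [algebraMap_clm_eq] at hle
  rw [posSemidef_iff_nonneg, map_sub]
  exact sub_nonneg.mpr hle

set_option synthInstance.maxHeartbeats 1000000 in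
lemma specNorm_le {M : Matrix m m ℂ} {t : ℝ} (hM : M.PosSemidef)
    (h : ((t : ℂ) • 1 - M).PosSemidef) (ht : 0 ≤ t) : specNorm M ≤ t := by
  have h0 : 0 ≤ Matrix.toEuclideanCLM (𝕜 := ℂ) M := (posSemidef_iff_nonneg M).mp hM
  have h1 : 0 ≤ algebraMap ℝ _ t - Matrix.toEuclideanCLM (𝕜 := ℂ) M := by
    have h2 := (posSemidef_iff_nonneg _).mp h
    rwa [map_sub, ← algebraMap_clm_eq] at h2
  exact (CStarAlgebra.norm_le_iff_le_algebraMap _ ht h0).mpr (sub_nonneg.mp h1)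

lemma specNorm_lb (M : Matrix m m ℂ) (t : ℂ) (v : m → ℂ) (hv : v ≠ 0)
    (hMv : M *ᵥ v = t • v) : ‖t‖ ≤ specNorm M := by
  set x : EuclideanSpace ℂ m := (WithLp.equiv 2 (m → ℂ)).symm v with hx_def
  have hx : x ≠ 0 := by
    intro h
    apply hv
    have := congrArg (WithLp.equiv 2 (m → ℂ)) h
    simpa [hx_def] using this
  have happ : Matrix.toEuclideanCLM (𝕜 := ℂ) M x = t • x := by
    rw [hx_def, Matrix.toEuclideanCLM_toLp]
    exact congrArg (WithLp.toLp 2) hMv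
  have hb := (Matrix.toEuclideanCLM (𝕜 := ℂ) M).le_opNorm x
  rw [happ, norm_smul] at hb
  have hx' : 0 < ‖x‖ := norm_pos_iff.mpr hx
  exact le_of_mul_le_mul_right hb hx'

end Lemmas

section Eig
variable {m : Type*} [Fintype m] [DecidableEq m] [Nonempty m]

lemma exists_eigenvector_specNorm {M : Matrix m m ℂ} (hM : M.PosSemidef) :
    ∃ v : m → ℂ, v ≠ 0 ∧ M *ᵥ v = ((specNorm M : ℝ) : ℂ) • v := by
  obtain ⟨i0, -, hmax⟩ := Finset.exists_max_image Finset.univ hM.1.eigenvalues Finset.univ_nonempty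
  set μ := hM.1.eigenvalues i0 with hμ_def
  have hμ0 : 0 ≤ μ := hM.eigenvalues_nonneg i0
  set v : m → ℂ := ⇑(hM.1.eigenvectorBasis i0) with hv_def
  have hv0 : v ≠ 0 := by
    intro h
    apply hM.1.eigenvectorBasis.orthonormal.ne_zero i0
    ext j
    exact congrFun h j
  have hMv : M *ᵥ v = (μ : ℂ) • v := by
    have h1 := hM.1.mulVec_eigenvectorBasis i0
    rwa [RCLike.real_smul_eq_coe_smul (K := ℂ)] at h1
  have h1 : μ ≤ specNorm M := by
    have h2 := specNorm_lb M (μ : ℂ) v hv0 hMv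
    rwa [Complex.norm_real, Real.norm_of_nonneg hμ0] at h2
  have h2 : specNorm M ≤ μ := by
    apply specNorm_le hM ?_ hμ0
    have hd : (Matrix.diagonal (fun i => (RCLike.ofReal (K := ℂ) (μ - hM.1.eigenvalues i)))).PosSemidef :=
      Matrix.posSemidef_diagonal_iff.mpr (fun i => by
        exact RCLike.ofReal_nonneg.mpr (sub_nonneg.mpr (hmax i (Finset.mem_univ i))))
    have h3 := hd.mul_mul_conjTranspose_same (hM.1.eigenvectorUnitary : Matrix m m ℂ)
    have hUU : (hM.1.eigenvectorUnitary : Matrix m m ℂ)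
        * (hM.1.eigenvectorUnitary : Matrix m m ℂ)ᴴ = 1 := by
      rw [← Matrix.star_eq_conjTranspose]
      exact Unitary.mul_star_self_of_mem hM.1.eigenvectorUnitary.2
    have heq : (hM.1.eigenvectorUnitary : Matrix m m ℂ)
          * Matrix.diagonal (fun i => (RCLike.ofReal (K := ℂ) (μ - hM.1.eigenvalues i)))
          * (hM.1.eigenvectorUnitary : Matrix m m ℂ)ᴴ
        = (μ : ℂ) • 1 - M := by
      have hdiag : Matrix.diagonal (fun i => (RCLike.ofReal (K := ℂ) (μ - hM.1.eigenvalues i)))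
          = (μ : ℂ) • 1 - Matrix.diagonal (RCLike.ofReal ∘ hM.1.eigenvalues) := by
        ext i j
        rw [Matrix.sub_apply, Matrix.smul_apply, Matrix.one_apply, Matrix.diagonal_apply,
          Matrix.diagonal_apply]
        by_cases h : i = j
        · simp only [if_pos h, Function.comp_apply, smul_eq_mul, mul_one]
          rw [RCLike.ofReal_sub]
          norm_num [RCLike.ofReal_alg]
        · simp [if_neg h]
      rw [hdiag, Matrix.mul_sub, Matrix.sub_mul, Matrix.mul_smul, Matrix.smul_mul,
        Matrix.mul_one, hUU]
      congr 1
      conv_rhs => rw [hM.1.spectral_theorem]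
      rw [Unitary.conjStarAlgAut_apply, Matrix.star_eq_conjTranspose]
    rwa [heq] at h3
  exact ⟨v, hv0, by rw [show specNorm M = μ from le_antisymm h2 h1]; exact hMv⟩

end Eig

namespace KronAux
variable {d : Type*} [Fintype d] [DecidableEq d] {n : ℕ}

def kfam (M : Fin n → Matrix d d ℂ) : Matrix (Fin n → d) (Fin n → d) ℂ :=
  Matrix.of fun r c => ∏ i, M i (r i) (c i)

lemma kronPow_eq (M : Matrix d d ℂ) : kronPow n M = kfam (fun _ => M) := rfl

lemma kfam_mul (M N : Fin n → Matrix d d ℂ) :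
    kfam M * kfam N = kfam (fun i => M i * N i) := by
  ext r c
  simp only [kfam, Matrix.mul_apply, Matrix.of_apply]
  rw [Finset.prod_univ_sum, Fintype.piFinset_univ]
  exact Finset.sum_congr rfl fun j _ => (Finset.prod_mul_distrib).symm

lemma kfam_conjTranspose (M : Fin n → Matrix d d ℂ) :
    (kfam M)ᴴ = kfam (fun i => (M i)ᴴ) := by
  ext r c
  simp [kfam, Matrix.conjTranspose_apply]

open scoped MatrixOrder in
lemma kfam_psd {M : Fin n → Matrix d d ℂ} (h : ∀ i, (M i).PosSemidef) :
    (kfam M).PosSemidef := by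
  choose N hN using fun i => (⟨CFC.sqrt (M i), by rw [(Matrix.nonneg_iff_posSemidef.mp (CFC.sqrt_nonneg (M i))).1.eq, CFC.sqrt_mul_sqrt_self _ (h i).nonneg]⟩ : ∃ N : Matrix d d ℂ, M i = Nᴴ * N)
  have he : kfam M = (kfam N)ᴴ * kfam N := by
    rw [kfam_conjTranspose, kfam_mul]
    exact congrArg kfam (funext fun i => hN i)
  rw [he]
  exact Matrix.posSemidef_conjTranspose_mul_self _

lemma kfam_mulVec (M : Fin n → Matrix d d ℂ) (u : Fin n → d → ℂ) :
    kfam M *ᵥ (fun r => ∏ i, u i (r i)) = fun r => ∏ i, (M i *ᵥ u i) (r i) := by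
  funext r
  simp only [kfam, Matrix.mulVec, dotProduct, Matrix.of_apply]
  rw [Finset.prod_univ_sum, Fintype.piFinset_univ]
  exact Finset.sum_congr rfl fun j _ => (Finset.prod_mul_distrib).symm

lemma kron_smul (c : ℂ) (M : Matrix d d ℂ) (n : ℕ) :
    kronPow n (c • M) = c ^ n • kronPow n M := by
  ext r c'
  simp only [kronPow, Matrix.of_apply, Matrix.smul_apply, smul_eq_mul,
    Finset.prod_mul_distrib, Finset.prod_const, Finset.card_univ, Fintype.card_fin]

lemma kron_mono {X Y : Matrix d d ℂ} (hX : X.PosSemidef) (hYX : (Y - X).PosSemidef) (n : ℕ) :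
    (kronPow n Y - kronPow n X).PosSemidef := by
  have hY : Y.PosSemidef := by
    have h := hYX.add hX
    rwa [sub_add_cancel] at h
  set G : ℕ → Matrix (Fin n → d) (Fin n → d) ℂ :=
    fun k => kfam (fun i : Fin n => if (i : ℕ) < k then X else Y) with hG
  have hG0 : G 0 = kronPow n Y := by
    rw [hG, kronPow_eq]
    exact congrArg kfam (funext fun i => by simp)
  have hGn : G n = kronPow n X := by
    rw [hG, kronPow_eq]
    exact congrArg kfam (funext fun i => by simp [i.isLt])
  have hstep : ∀ k, (G k - G (k + 1)).PosSemidef := by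
    intro k
    by_cases hk : k < n
    · have hEq : G k - G (k + 1) =
          kfam (fun i : Fin n =>
            if (i : ℕ) < k then X else if (i : ℕ) = k then Y - X else Y) := by
        ext r c
        simp only [hG, kfam, Matrix.sub_apply, Matrix.of_apply]
        set k' : Fin n := ⟨k, hk⟩ with hk'
        rw [← Finset.mul_prod_erase _ _ (Finset.mem_univ k'),
            ← Finset.mul_prod_erase _ _ (Finset.mem_univ k'),
            ← Finset.mul_prod_erase _ _ (Finset.mem_univ k')]
        have h1 : ∀ i ∈ Finset.univ.erase k', (i : ℕ) ≠ k := by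
          intro i hi hic
          exact Finset.ne_of_mem_erase hi (Fin.ext hic)
        have e1 : ∀ i ∈ Finset.univ.erase k',
            (if (i : ℕ) < k + 1 then X else Y) (r i) (c i)
              = (if (i : ℕ) < k then X else Y) (r i) (c i) := by
          intro i hi
          have hik := h1 i hi
          by_cases h2 : (i : ℕ) < k
          · rw [if_pos h2, if_pos (Nat.lt_succ_of_lt h2)]
          · rw [if_neg h2, if_neg (by omega)]
        have e2 : ∀ i ∈ Finset.univ.erase k',
            (if (i : ℕ) < k then X else if (i : ℕ) = k then Y - X else Y) (r i) (c i)
              = (if (i : ℕ) < k then X else Y) (r i) (c i) := by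
          intro i hi
          have hik := h1 i hi
          by_cases h2 : (i : ℕ) < k
          · rw [if_pos h2, if_pos h2]
          · rw [if_neg h2, if_neg h2, if_neg hik]
        rw [Finset.prod_congr rfl e1, Finset.prod_congr rfl e2]
        have hv : (k' : ℕ) = k := rfl
        rw [if_neg (by omega : ¬ (k' : ℕ) < k), if_pos (by omega : (k' : ℕ) < k + 1),
          if_neg (by omega : ¬ (k' : ℕ) < k), if_pos hv, Matrix.sub_apply]
        ring
      rw [hEq]
      apply kfam_psd
      intro i
      split_ifs
      · exact hX
      · exact hYX
      · exact hY
    · have hEq : G k = G (k + 1) := by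
        simp only [hG]
        apply congrArg kfam (funext fun i => ?_)
        have h2 : (i : ℕ) < k := lt_of_lt_of_le i.isLt (not_lt.mp hk)
        rw [if_pos h2, if_pos (Nat.lt_succ_of_lt h2)]
      rw [hEq, sub_self]
      exact Matrix.PosSemidef.zero
  have hchain : ∀ k, (G 0 - G k).PosSemidef := by
    intro k
    induction k with
    | zero => rw [sub_self]; exact Matrix.PosSemidef.zero
    | succ k ih =>
      have h := ih.add (hstep k)
      rwa [sub_add_sub_cancel] at h
  have h := hchain n
  rwa [hG0, hGn] at h

end KronAux

open KronAux in
open scoped MatrixOrder in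
set_option maxHeartbeats 1000000 in
theorem stmt14 {d : Type*} [Fintype d] [DecidableEq d] [Nonempty d]
    (n : ℕ) (hn : 1 ≤ n) (A B : Matrix d d ℂ)
    (hA : A.PosSemidef) (hBH : B.IsHermitian) (hBA : (B - A).PosSemidef)
    (hB : B * B = B) :
    specNorm (kronPow n B - kronPow n (B - A)) = 1 - (1 - specNorm A) ^ n := by
  classical
  set a := specNorm A with ha_def
  have ha0 : (0:ℝ) ≤ a := norm_nonneg _
  have hBpsd : B.PosSemidef := by
    have h := hA.add hBA
    rwa [add_sub_cancel] at h
  have h1B : (1 - B).PosSemidef := one_sub_proj hBH hB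
  have ha1 : a ≤ 1 := by
    apply specNorm_le hA ?_ zero_le_one
    have h := hBA.add h1B
    have he : B - A + (1 - B) = ((1:ℝ):ℂ) • 1 - A := by
      push_cast
      rw [one_smul]
      abel
    rwa [he] at h
  -- Step 1 : A = A * B = B * A
  have hQB : (1 - B) * B = 0 := by rw [sub_mul, one_mul, hB, sub_self]
  have hQH : (1 - B : Matrix d d ℂ).IsHermitian := Matrix.isHermitian_one.sub hBH
  have hQAQ : ((1 - B) * A * (1 - B)).PosSemidef := by
    have h := hA.mul_mul_conjTranspose_same (1 - B)
    rwa [hQH.eq] at h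
  have hQCQ : ((1 - B) * (B - A) * (1 - B)).PosSemidef := by
    have h := hBA.mul_mul_conjTranspose_same (1 - B)
    rwa [hQH.eq] at h
  have hsum : (1 - B) * A * (1 - B) + (1 - B) * (B - A) * (1 - B) = 0 := by
    have he : (1 - B) * A * (1 - B) + (1 - B) * (B - A) * (1 - B)
        = ((1 - B) * B) * (1 - B) := by noncomm_ring
    rw [he, hQB, zero_mul]
  have hz : (1 - B) * A * (1 - B) = 0 := by
    apply psd_eq_zero hQAQ
    have hneg : -((1 - B) * A * (1 - B)) = (1 - B) * (B - A) * (1 - B) :=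
      (neg_eq_of_add_eq_zero_right hsum)
    rwa [hneg]
  have hSQ : CFC.sqrt A * (1 - B) = 0 := by
    apply Matrix.conjTranspose_mul_self_eq_zero.mp
    rw [Matrix.conjTranspose_mul, hQH.eq, (Matrix.nonneg_iff_posSemidef.mp (CFC.sqrt_nonneg A)).1.eq]
    have he : (1 - B) * CFC.sqrt A * (CFC.sqrt A * (1 - B))
        = (1 - B) * (CFC.sqrt A * CFC.sqrt A) * (1 - B) := by noncomm_ring
    rw [he, CFC.sqrt_mul_sqrt_self A hA.nonneg]
    exact hz
  have hAQ : A * (1 - B) = 0 := by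
    have he : A * (1 - B) = CFC.sqrt A * (CFC.sqrt A * (1 - B)) := by
      rw [← Matrix.mul_assoc, CFC.sqrt_mul_sqrt_self A hA.nonneg]
    rw [he, hSQ, Matrix.mul_zero]
  have hAB : A * B = A := by
    have h := hAQ
    rw [mul_sub, mul_one] at h
    have := sub_eq_zero.mp h
    exact this.symm
  have hBA' : B * A = A := by
    have h := congrArg Matrix.conjTranspose hAB
    rwa [Matrix.conjTranspose_mul, hA.1.eq, hBH.eq] at h
  -- key : a•B - A is PSD
  have hF3 := sub_smul_one_psd hA
  have hkey : ((a : ℂ) • B - A).PosSemidef := by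
    have h5 := hF3.mul_mul_conjTranspose_same B
    have h6 : B * (((a:ℝ) : ℂ) • 1 - A) * Bᴴ = (a : ℂ) • B - A := by
      rw [hBH.eq, Matrix.mul_sub, Matrix.sub_mul, mul_smul_comm, smul_mul_assoc,
        Matrix.mul_one, hB, hBA', hAB]
    rwa [h6] at h5
  -- Kronecker setup
  set P := kronPow n B with hP_def
  set R := kronPow n (B - A) with hR_def
  have hPpsd : P.PosSemidef := by
    rw [hP_def, kronPow_eq]
    exact kfam_psd (fun _ => hBpsd)
  have hPmul : P * P = P := by
    rw [hP_def, kronPow_eq, kfam_mul]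
    exact congrArg kfam (funext fun i => hB)
  have hPR : (P - R).PosSemidef := by
    apply kron_mono hBA
    rw [sub_sub_cancel]
    exact hA
  by_cases ha : a = 0
  · have hphi : Matrix.toEuclideanCLM (𝕜 := ℂ) A = 0 := by
      have : ‖Matrix.toEuclideanCLM (𝕜 := ℂ) A‖ = 0 := ha
      exact norm_eq_zero.mp this
    have hA0 : A = 0 :=
      Matrix.toEuclideanCLM.injective (by rw [map_zero]; exact hphi)
    rw [ha, hP_def, hR_def, hA0, sub_zero, sub_self]
    norm_num
    show ‖Matrix.toEuclideanCLM (𝕜 := ℂ) (0 : Matrix (Fin n → d) (Fin n → d) ℂ)‖ = 0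
    rw [map_zero, norm_zero]
  · have ha' : 0 < a := lt_of_le_of_ne ha0 (Ne.symm ha)
    obtain ⟨v, hv0, hAv⟩ := exists_eigenvector_specNorm hA
    have hBv : B *ᵥ v = v := by
      have h7 : B *ᵥ (A *ᵥ v) = A *ᵥ v := by rw [Matrix.mulVec_mulVec, hBA']
      rw [hAv, Matrix.mulVec_smul] at h7
      have haC : ((a:ℝ) : ℂ) ≠ 0 := by exact_mod_cast ha
      exact smul_right_injective (d → ℂ) haC h7
    have hCv : (B - A) *ᵥ v = ((1 - a : ℝ) : ℂ) • v := by
      rw [Matrix.sub_mulVec, hBv, hAv]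
      push_cast
      rw [sub_smul, one_smul]
    set w : (Fin n → d) → ℂ := fun r => ∏ i, v (r i) with hw_def
    have hw0 : w ≠ 0 := by
      obtain ⟨j, hj⟩ := Function.ne_iff.mp hv0
      intro h
      have h2 := congrFun h (fun _ => j)
      simp only [hw_def, Finset.prod_const, Finset.card_univ, Fintype.card_fin,
        Pi.zero_apply] at h2
      exact hj (by simpa using pow_eq_zero_iff (by omega : n ≠ 0) |>.mp h2)
    have hPw : P *ᵥ w = w := by
      rw [hP_def, kronPow_eq, hw_def, kfam_mulVec]
      funext r
      simp [hBv]
    have hRw : R *ᵥ w = ((1 - a : ℝ) : ℂ) ^ n • w := by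
      rw [hR_def, kronPow_eq, hw_def, kfam_mulVec]
      funext r
      simp only [hCv, Pi.smul_apply, smul_eq_mul, Finset.prod_mul_distrib, Finset.prod_const,
        Finset.card_univ, Fintype.card_fin]
    have hdiffw : (P - R) *ᵥ w = ((1 - (1 - a) ^ n : ℝ) : ℂ) • w := by
      rw [Matrix.sub_mulVec, hPw, hRw]
      push_cast
      rw [sub_smul, one_smul]
    have ht0 : (0:ℝ) ≤ 1 - (1 - a) ^ n := by
      have h8 : (1 - a) ^ n ≤ 1 := pow_le_one₀ (by linarith) (by linarith)
      linarith
    have hlb := specNorm_lb _ _ w hw0 hdiffw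
    rw [Complex.norm_real, Real.norm_of_nonneg ht0] at hlb
    have hub : specNorm (P - R) ≤ 1 - (1 - a) ^ n := by
      apply specNorm_le hPR ?_ ht0
      have hsB : (((1 - a : ℝ) : ℂ) • B).PosSemidef := psd_smul hBpsd (by linarith)
      have hCs : ((B - A) - ((1 - a : ℝ) : ℂ) • B).PosSemidef := by
        have he : (B - A) - ((1 - a : ℝ) : ℂ) • B = (a : ℂ) • B - A := by
          push_cast
          rw [sub_smul, one_smul]
          abel
        rw [he]
        exact hkey
      have hmono2 := kron_mono hsB hCs n
      have hscal : kronPow n (((1 - a : ℝ) : ℂ) • B) = ((1 - a : ℝ) : ℂ) ^ n • P :=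
        kron_smul _ _ n
      have h1P : (1 - P).PosSemidef := one_sub_proj hPpsd.1 hPmul
      have hdecomp : ((1 - (1 - a) ^ n : ℝ) : ℂ) • 1 - (P - R)
          = (R - ((1 - a : ℝ) : ℂ) ^ n • P) + ((1 - (1 - a) ^ n : ℝ) : ℂ) • (1 - P) := by
        push_cast
        module
      rw [hdecomp]
      have hterm1 : (R - ((1 - a : ℝ) : ℂ) ^ n • P).PosSemidef := by
        rwa [hscal] at hmono2
      exact hterm1.add (psd_smul h1P ht0)
    exact le_antisymm hub hlb
end

section
/- Let Q and E be positive semidefinite complex matrices of the same finite size with Q ≤ E and E ≠ 0, and set p = sInf { t : ℝ, t ≥ 0 and Q ≤ t·E } (the optimal single-repetition winning probability in the model with abstention). Then sInf { t : ℝ, t ≥ 0 and E ⊗ₖ E − (E − Q) ⊗ₖ (E − Q) ≤ t·(E ⊗ₖ E) } = 1 − (1 − p)² = 2p − p². That is, the optimal probability of winning at least one of two parallel repetitions equals the independent-play value, so there is no quantum hedging in the model with protocol errors. -/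
open scoped ComplexOrder Kronecker
open Matrix

namespace Stmt16Aux

variable {d : Type*} [Fintype d] [DecidableEq d]

lemma conjTranspose_kron (A B : Matrix d d ℂ) : (A ⊗ₖ B)ᴴ = Aᴴ ⊗ₖ Bᴴ := by
  ext ⟨i, j⟩ ⟨k, l⟩
  simp [conjTranspose_apply, kroneckerMap_apply]

lemma psd_kron {A B : Matrix d d ℂ} (hA : A.PosSemidef) (hB : B.PosSemidef) :
    (A ⊗ₖ B).PosSemidef := by
  exact hA.kronecker hB

lemma herm_smul (t : ℝ) {A : Matrix d d ℂ} (hA : A.IsHermitian) : (t • A).IsHermitian := by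
  show (t • A)ᴴ = t • A
  rw [conjTranspose_smul, star_trivial, hA.eq]

lemma quad_eq_re {A : Matrix d d ℂ} (hA : A.PosSemidef) (x : d → ℂ) :
    star x ⬝ᵥ A *ᵥ x = ((star x ⬝ᵥ A *ᵥ x).re : ℂ) := by
  have him : (star x ⬝ᵥ A *ᵥ x).im = 0 := ((Complex.le_def.mp (hA.dotProduct_mulVec_nonneg x)).2).symm
  exact Complex.ext (by simp) (by simp [him])

lemma quad_re_nonneg {A : Matrix d d ℂ} (hA : A.PosSemidef) (x : d → ℂ) :
    0 ≤ (star x ⬝ᵥ A *ᵥ x).re := by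
  simpa using (Complex.le_def.mp (hA.dotProduct_mulVec_nonneg x)).1

lemma quad_smul_sub (t : ℝ) (A B : Matrix d d ℂ) (x : d → ℂ) :
    star x ⬝ᵥ (t • A - B) *ᵥ x
      = (t : ℂ) * (star x ⬝ᵥ A *ᵥ x) - star x ⬝ᵥ B *ᵥ x := by
  rw [sub_mulVec, dotProduct_sub, smul_mulVec, dotProduct_smul, Complex.real_smul]

lemma kron_mulVec (A B : Matrix d d ℂ) (x y : d → ℂ) (q : d × d) :
    ((A ⊗ₖ B) *ᵥ fun r : d × d => x r.1 * y r.2) q = (A *ᵥ x) q.1 * (B *ᵥ y) q.2 := by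
  show ∑ r : d × d, (A ⊗ₖ B) q r * (x r.1 * y r.2)
      = (∑ k, A q.1 k * x k) * (∑ l, B q.2 l * y l)
  simp only [Fintype.sum_prod_type]
  rw [Finset.sum_mul_sum]
  refine Finset.sum_congr rfl fun i _ => Finset.sum_congr rfl fun j _ => ?_
  simp only [kroneckerMap_apply]
  ring

lemma kron_quad (A B : Matrix d d ℂ) (x : d → ℂ) :
    (star fun q : d × d => x q.1 * x q.2) ⬝ᵥ
        (A ⊗ₖ B) *ᵥ (fun q : d × d => x q.1 * x q.2)
      = (star x ⬝ᵥ A *ᵥ x) * (star x ⬝ᵥ B *ᵥ x) := by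
  show ∑ q : d × d, star (x q.1 * x q.2) * ((A ⊗ₖ B) *ᵥ fun r : d × d => x r.1 * x r.2) q
      = (∑ i, star x i * (A *ᵥ x) i) * (∑ j, star x j * (B *ᵥ x) j)
  simp only [Fintype.sum_prod_type]
  rw [Finset.sum_mul_sum]
  refine Finset.sum_congr rfl fun i _ => Finset.sum_congr rfl fun j _ => ?_
  rw [show ((i, j) : d × d) = (i, j) from rfl, kron_mulVec A B x x (i, j)]
  simp only [Pi.star_apply, star_mul']
  ring

lemma kron_sub_sq (A B : Matrix d d ℂ) :
    A ⊗ₖ A - B ⊗ₖ B = (A - B) ⊗ₖ A + B ⊗ₖ (A - B) := by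
  ext ⟨i, j⟩ ⟨k, l⟩
  simp [kroneckerMap_apply, Matrix.sub_apply, Matrix.add_apply]
  ring

end Stmt16Aux

/-- Let `Q ≤ E` be positive semidefinite with `E ≠ 0`, and let
`p = inf {t ≥ 0 : Q ≤ t·E}` be the optimal single-repetition winning probability in the
model with abstention. Then the optimal probability of winning at least one of two parallel
repetitions, `inf {t ≥ 0 : E ⊗ E − (E − Q) ⊗ (E − Q) ≤ t·(E ⊗ E)}`, equals
`1 − (1 − p)² = 2p − p²`: no quantum hedging is possible in the model with protocol errors. -/
theorem stmt16 {d : Type*} [Fintype d] [DecidableEq d] [Nonempty d]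
    (Q E : Matrix d d ℂ) (hQ : Q.PosSemidef) (hE : E.PosSemidef)
    (hQE : (E - Q).PosSemidef) (hEne : E ≠ 0)
    (p : ℝ) (hp : p = sInf {t : ℝ | 0 ≤ t ∧ (t • E - Q).PosSemidef}) :
    sInf {t : ℝ | 0 ≤ t ∧
        (t • (E ⊗ₖ E) - (E ⊗ₖ E - (E - Q) ⊗ₖ (E - Q))).PosSemidef}
      = 1 - (1 - p) ^ 2 := by
  classical
  open Stmt16Aux in
  set S : Set ℝ := {t : ℝ | 0 ≤ t ∧ (t • E - Q).PosSemidef} with hS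
  -- basic facts about S
  have h1S : (1 : ℝ) ∈ S := ⟨zero_le_one, by simpa using hQE⟩
  have hSbdd : BddBelow S := ⟨0, fun t ht => ht.1⟩
  have hp0 : 0 ≤ p := hp ▸ le_csInf ⟨1, h1S⟩ fun t ht => ht.1
  have hp1 : p ≤ 1 := hp ▸ csInf_le hSbdd h1S
  -- quadratic-form characterization of membership in `S`
  have cond : ∀ t : ℝ, (t • E - Q).PosSemidef ↔ ∀ x : d → ℂ,
      (star x ⬝ᵥ Q *ᵥ x).re ≤ t * (star x ⬝ᵥ E *ᵥ x).re := by
    intro t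
    constructor
    · intro h x
      have h2 := h.dotProduct_mulVec_nonneg x
      rw [Stmt16Aux.quad_smul_sub, Stmt16Aux.quad_eq_re hE, Stmt16Aux.quad_eq_re hQ,
        ← Complex.ofReal_mul, ← Complex.ofReal_sub, Complex.zero_le_real] at h2
      linarith
    · intro h
      refine .of_dotProduct_mulVec_nonneg ((Stmt16Aux.herm_smul t hE.1).sub hQ.1) fun x => ?_
      rw [Stmt16Aux.quad_smul_sub, Stmt16Aux.quad_eq_re hE, Stmt16Aux.quad_eq_re hQ,
        ← Complex.ofReal_mul, ← Complex.ofReal_sub, Complex.zero_le_real]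
      linarith [h x]
  -- the infimum is attained: p ∈ S
  have hpS : (p • E - Q).PosSemidef := by
    rw [cond p]
    intro x
    have ha : 0 ≤ (star x ⬝ᵥ E *ᵥ x).re := Stmt16Aux.quad_re_nonneg hE x
    have hb : 0 ≤ (star x ⬝ᵥ Q *ᵥ x).re := Stmt16Aux.quad_re_nonneg hQ x
    rcases eq_or_lt_of_le ha with h0 | hpos
    · have := (cond 1).mp h1S.2 x
      rw [← h0] at this ⊢
      simpa using this
    · have hle : (star x ⬝ᵥ Q *ᵥ x).re / (star x ⬝ᵥ E *ᵥ x).re ≤ p := by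
        rw [hp]
        refine le_csInf ⟨1, h1S⟩ fun t ht => ?_
        rw [div_le_iff₀ hpos]
        calc (star x ⬝ᵥ Q *ᵥ x).re ≤ t * (star x ⬝ᵥ E *ᵥ x).re := (cond t).mp ht.2 x
          _ = t * (star x ⬝ᵥ E *ᵥ x).re := rfl
      calc (star x ⬝ᵥ Q *ᵥ x).re
          = (star x ⬝ᵥ Q *ᵥ x).re / (star x ⬝ᵥ E *ᵥ x).re * (star x ⬝ᵥ E *ᵥ x).re := by
            field_simp
        _ ≤ p * (star x ⬝ᵥ E *ᵥ x).re := by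
            exact mul_le_mul_of_nonneg_right hle ha
  -- the matrix (1-p)•E is psd, and Q0 - (1-p)•E = p•E - Q
  have hsmulE : ∀ c : ℝ, 0 ≤ c → ((c : ℝ) • E).PosSemidef := by
    intro c hc
    refine .of_dotProduct_mulVec_nonneg (Stmt16Aux.herm_smul c hE.1) fun x => ?_
    rw [smul_mulVec, dotProduct_smul, Complex.real_smul, Stmt16Aux.quad_eq_re hE,
      ← Complex.ofReal_mul, Complex.zero_le_real]
    exact mul_nonneg hc (Stmt16Aux.quad_re_nonneg hE x)
  have hQ0ge : ((E - Q) - (1 - p) • E).PosSemidef := by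
    have : (E - Q) - (1 - p) • E = p • E - Q := by module
    rw [this]; exact hpS
  -- the two-repetition value is in the target set
  have hmemT : (0 : ℝ) ≤ 1 - (1 - p) ^ 2 ∧
      (((1 - (1 - p) ^ 2 : ℝ)) • (E ⊗ₖ E) - (E ⊗ₖ E - (E - Q) ⊗ₖ (E - Q))).PosSemidef := by
    constructor
    · nlinarith
    · have hmat : ((1 - (1 - p) ^ 2 : ℝ)) • (E ⊗ₖ E) - (E ⊗ₖ E - (E - Q) ⊗ₖ (E - Q))
          = ((E - Q) ⊗ₖ (E - Q) - ((1 - p) • E) ⊗ₖ ((1 - p) • E)) := by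
        rw [smul_kronecker, kronecker_smul, smul_smul, ← sq]
        module
      rw [hmat, Stmt16Aux.kron_sub_sq]
      exact ((Stmt16Aux.psd_kron hQ0ge hQE).add
        (Stmt16Aux.psd_kron (hsmulE (1 - p) (by linarith)) hQ0ge))
  -- every element of the target set is at least 1 - (1-p)^2
  have hlb : ∀ t ∈ {t : ℝ | 0 ≤ t ∧
      (t • (E ⊗ₖ E) - (E ⊗ₖ E - (E - Q) ⊗ₖ (E - Q))).PosSemidef},
      1 - (1 - p) ^ 2 ≤ t := by
    rintro t ⟨ht0, htM⟩
    rcases le_or_gt 1 t with h1t | ht1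
    · nlinarith
    · set s : ℝ := Real.sqrt (1 - t) with hsdef
      have hs0 : 0 ≤ s := Real.sqrt_nonneg _
      have hs2 : s ^ 2 = 1 - t := Real.sq_sqrt (by linarith)
      have hs1 : s ≤ 1 := by
        rw [hsdef]
        exact Real.sqrt_le_one.mpr (by linarith)
      -- from the tensor inequality deduce the single-copy inequality
      have hkey : ((E - Q) - s • E).PosSemidef := by
        refine .of_dotProduct_mulVec_nonneg (hQE.1.sub (Stmt16Aux.herm_smul s hE.1)) fun x => ?_
        have hy := htM.dotProduct_mulVec_nonneg fun q : d × d => x q.1 * x q.2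
        have expand : (star fun q : d × d => x q.1 * x q.2) ⬝ᵥ
            (t • (E ⊗ₖ E) - (E ⊗ₖ E - (E - Q) ⊗ₖ (E - Q))) *ᵥ
              (fun q : d × d => x q.1 * x q.2)
            = (t : ℂ) * ((star x ⬝ᵥ E *ᵥ x) * (star x ⬝ᵥ E *ᵥ x))
              - ((star x ⬝ᵥ E *ᵥ x) * (star x ⬝ᵥ E *ᵥ x)
                - (star x ⬝ᵥ (E - Q) *ᵥ x) * (star x ⬝ᵥ (E - Q) *ᵥ x)) := by
          rw [sub_mulVec, sub_mulVec, dotProduct_sub, dotProduct_sub, smul_mulVec,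
            dotProduct_smul, Complex.real_smul, Stmt16Aux.kron_quad, Stmt16Aux.kron_quad]
        rw [expand, Stmt16Aux.quad_eq_re hE, Stmt16Aux.quad_eq_re hQE] at hy
        push_cast at hy
        rw [← Complex.ofReal_mul, ← Complex.ofReal_mul, ← Complex.ofReal_mul,
          ← Complex.ofReal_sub, ← Complex.ofReal_sub, Complex.zero_le_real] at hy
        set α : ℝ := (star x ⬝ᵥ E *ᵥ x).re with hα
        set γ : ℝ := (star x ⬝ᵥ (E - Q) *ᵥ x).re with hγ
        have hα0 : 0 ≤ α := Stmt16Aux.quad_re_nonneg hE x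
        have hγ0 : 0 ≤ γ := Stmt16Aux.quad_re_nonneg hQE x
        have hsq : (s * α) ^ 2 ≤ γ ^ 2 := by nlinarith
        have hsα : s * α ≤ γ := by nlinarith [mul_nonneg hs0 hα0]
        have : star x ⬝ᵥ ((E - Q) - s • E) *ᵥ x
            = ((γ - s * α : ℝ) : ℂ) := by
          rw [sub_mulVec, dotProduct_sub, smul_mulVec, dotProduct_smul,
            Complex.real_smul, Stmt16Aux.quad_eq_re hE, Stmt16Aux.quad_eq_re hQE,
            ← hα, ← hγ]
          push_cast
          ring
        rw [this, Complex.zero_le_real]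
        linarith
      -- hence 1 - s ∈ S and so p ≤ 1 - s
      have h1sS : (1 - s : ℝ) ∈ S := by
        refine ⟨by linarith, ?_⟩
        have : (1 - s : ℝ) • E - Q = (E - Q) - s • E := by module
        rw [this]; exact hkey
      have hps : p ≤ 1 - s := hp ▸ csInf_le hSbdd h1sS
      have : s ^ 2 ≤ (1 - p) ^ 2 := by nlinarith
      nlinarith
  -- conclude
  refine le_antisymm (csInf_le ⟨0, fun t ht => ht.1⟩ hmemT) (le_csInf ⟨_, hmemT⟩ hlb)
end
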